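/- arXiv:1103.4208 — 3 statements merged into one kernel-verified Lean document; each statement's English description precedes it below -/
import Mathlib

section
/- Let (X_m) be a birth-death chain on ℕ started at k ≥ 1 with up-probabilities r_n and down-probabilities l_n = 1 − r_n from state n ≥ 1, state 0 absorbing, and r_n ∈ (0,1). If t_∞ := lim_{n→∞} (l_1⋯l_n)/(r_1⋯r_n) exists in (0,∞), then lim_{m→∞} E[X_m] exists and equals (1 + l_1/r_1 + ⋯ + (l_1⋯l_{k−1})/(r_1⋯r_{k−1}))/t_∞. -/
open MeasureTheory ProbabilityTheory Filter Set

/-- A birth-death chain on ℕ with up-probabilities `r n` from state `n ≥ 1`,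
down-probabilities `1 - r n`, state `0` absorbing, started at `k`. -/
structure IsBirthDeathChain {Ω : Type*} [MeasurableSpace Ω] (μ : Measure Ω)
    (X : ℕ → Ω → ℕ) (r : ℕ → ℝ) (k : ℕ) : Prop where
  isProb : IsProbabilityMeasure μ
  meas : ∀ m, Measurable (X m)
  start : ∀ᵐ ω ∂μ, X 0 ω = k
  step_up : ∀ (m : ℕ) (path : ℕ → ℕ), 0 < path m →
    μ (⋂ i ∈ Finset.range (m + 1), {ω | X i ω = path i}) ≠ 0 →
    μ[{ω | X (m + 1) ω = path m + 1} | ⋂ i ∈ Finset.range (m + 1), {ω | X i ω = path i}]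
      = ENNReal.ofReal (r (path m))
  step_down : ∀ (m : ℕ) (path : ℕ → ℕ), 0 < path m →
    μ (⋂ i ∈ Finset.range (m + 1), {ω | X i ω = path i}) ≠ 0 →
    μ[{ω | X (m + 1) ω = path m - 1} | ⋂ i ∈ Finset.range (m + 1), {ω | X i ω = path i}]
      = ENNReal.ofReal (1 - r (path m))
  absorb : ∀ (m : ℕ) (path : ℕ → ℕ), path m = 0 →
    μ (⋂ i ∈ Finset.range (m + 1), {ω | X i ω = path i}) ≠ 0 →
    μ[{ω | X (m + 1) ω = 0} | ⋂ i ∈ Finset.range (m + 1), {ω | X i ω = path i}] = 1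

namespace BDC

variable {Ω : Type*} [MeasurableSpace Ω] {μ : Measure Ω} {X : ℕ → Ω → ℕ} {r : ℕ → ℝ} {k : ℕ}

def cylSet (X : ℕ → Ω → ℕ) (m : ℕ) (f : ℕ → ℕ) : Set Ω :=
  ⋂ i ∈ Finset.range (m + 1), {ω | X i ω = f i}

lemma cylSet_meas (hm : ∀ m, Measurable (X m)) (m : ℕ) (f : ℕ → ℕ) :
    MeasurableSet (cylSet X m f) :=
  Finset.measurableSet_biInter _ (fun i _ => hm i (measurableSet_singleton (f i)))

lemma mem_cylSet {m : ℕ} {f : ℕ → ℕ} {ω : Ω} :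
    ω ∈ cylSet X m f ↔ ∀ i ≤ m, X i ω = f i := by
  simp [cylSet, Nat.lt_succ_iff]

def extPath (m n : ℕ) (v : Fin m → ℕ) : ℕ → ℕ :=
  fun i => if h : i < m then v ⟨i, h⟩ else n

lemma extPath_last (m n : ℕ) (v : Fin m → ℕ) : extPath m n v m = n := by
  simp [extPath]

lemma value_partition (hm : ∀ m, Measurable (X m)) (m : ℕ) (S : Set Ω)
    (hS : MeasurableSet S) : μ S = ∑' n : ℕ, μ (S ∩ {ω | X m ω = n}) := by
  have hcov : S = ⋃ n : ℕ, S ∩ {ω | X m ω = n} := by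
    ext ω; simp only [Set.mem_iUnion, Set.mem_inter_iff, Set.mem_setOf_eq]
    exact ⟨fun h => ⟨X m ω, h, rfl⟩, fun ⟨n, h, _⟩ => h⟩
  have hdisj : Pairwise (Function.onFun Disjoint (fun n => S ∩ {ω | X m ω = n})) := by
    intro a b hab
    simp only [Function.onFun, Set.disjoint_left]
    rintro ω ⟨-, ha⟩ ⟨-, hb⟩
    exact hab (ha ▸ hb ▸ rfl)
  conv_lhs => rw [hcov]
  exact measure_iUnion hdisj (fun n => hS.inter (hm m (measurableSet_singleton n)))

lemma hist_partition (hm : ∀ m, Measurable (X m)) (m n : ℕ) (S : Set Ω)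
    (hS : MeasurableSet S) :
    μ (S ∩ {ω | X m ω = n}) = ∑' v : Fin m → ℕ, μ (S ∩ cylSet X m (extPath m n v)) := by
  have hcov : S ∩ {ω | X m ω = n} = ⋃ v : Fin m → ℕ, S ∩ cylSet X m (extPath m n v) := by
    ext ω
    simp only [Set.mem_iUnion, Set.mem_inter_iff, Set.mem_setOf_eq, mem_cylSet]
    constructor
    · rintro ⟨hs, hn⟩
      refine ⟨fun i => X i.1 ω, hs, fun i hi => ?_⟩
      rcases lt_or_eq_of_le hi with h | h
      · simp [extPath, h]
      · subst h; simp [extPath, hn]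
    · rintro ⟨v, hs, hv⟩
      exact ⟨hs, by simpa [extPath_last] using hv m le_rfl⟩
  have hdisj : Pairwise (Function.onFun Disjoint
      (fun v : Fin m → ℕ => S ∩ cylSet X m (extPath m n v))) := by
    intro a b hab
    obtain ⟨i, hi⟩ := Function.ne_iff.mp hab
    simp only [Function.onFun, Set.disjoint_left]
    rintro ω ⟨-, ha⟩ ⟨-, hb⟩
    have h1 := mem_cylSet.mp ha i.1 (le_of_lt i.2)
    have h2 := mem_cylSet.mp hb i.1 (le_of_lt i.2)
    apply hi
    have e1 : extPath m n a i.1 = a i := by simp [extPath, i.2]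
    have e2 : extPath m n b i.1 = b i := by simp [extPath, i.2]
    rw [← e1, ← h1, h2, e2]
  conv_lhs => rw [hcov]
  exact measure_iUnion hdisj (fun v => hS.inter (cylSet_meas hm m _))

lemma cond_inter [IsFiniteMeasure μ] {A B : Set Ω} (hB : MeasurableSet B) {c : ENNReal}
    (h : μ B ≠ 0 → μ[A|B] = c) : μ (A ∩ B) = c * μ B := by
  rcases eq_or_ne (μ B) 0 with h0 | h0
  · rw [measure_inter_null_of_null_right _ h0, h0, mul_zero]
  · rw [← h h0, ProbabilityTheory.cond_apply hB, Set.inter_comm, mul_comm, ← mul_assoc,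
      ENNReal.mul_inv_cancel h0 (measure_ne_top μ B), one_mul]

noncomputable def coef (r : ℕ → ℝ) (j n : ℕ) : ENNReal :=
  if n = 0 then (if j = 0 then 1 else 0)
  else if j = n + 1 then ENNReal.ofReal (r n)
  else if j = n - 1 then ENNReal.ofReal (1 - r n) else 0

lemma cyl_step (hX : IsBirthDeathChain μ X r k) (hr : ∀ n, 1 ≤ n → r n ∈ Set.Ioo (0 : ℝ) 1)
    (m : ℕ) (f : ℕ → ℕ) (j : ℕ) :
    μ ({ω | X (m + 1) ω = j} ∩ cylSet X m f) = coef r j (f m) * μ (cylSet X m f) := by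
  haveI := hX.isProb
  have hC : MeasurableSet (cylSet X m f) := cylSet_meas hX.meas m f
  set C := cylSet X m f with hCdef
  rcases Nat.eq_zero_or_pos (f m) with hn | hn
  · have h0 : μ ({ω | X (m + 1) ω = 0} ∩ C) = 1 * μ C :=
      cond_inter hC (fun hne => hX.absorb m f hn hne)
    rw [one_mul] at h0
    rcases eq_or_ne j 0 with hj | hj
    · subst hj; rw [coef, if_pos hn, if_pos rfl, one_mul, h0]
    · rw [coef, if_pos hn, if_neg hj, zero_mul]
      have hd : μ (C \ {ω | X (m + 1) ω = 0}) = 0 := by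
        have hA : MeasurableSet {ω | X (m + 1) ω = 0} :=
          hX.meas (m+1) (measurableSet_singleton 0)
        have := measure_inter_add_diff (μ := μ) C hA
        rw [Set.inter_comm] at h0
        rw [h0] at this
        exact (ENNReal.add_right_inj (measure_ne_top μ C)).mp (by rw [this, add_zero])
      refine measure_mono_null (fun ω hω => ?_) hd
      exact ⟨hω.2, fun h => hj (hω.1.symm ▸ h)⟩
  · have hrn := hr (f m) hn
    have hup : μ ({ω | X (m + 1) ω = f m + 1} ∩ C) = ENNReal.ofReal (r (f m)) * μ C :=
      cond_inter hC (fun hne => hX.step_up m f hn hne)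
    have hdown : μ ({ω | X (m + 1) ω = f m - 1} ∩ C) = ENNReal.ofReal (1 - r (f m)) * μ C :=
      cond_inter hC (fun hne => hX.step_down m f hn hne)
    have hne' : f m + 1 ≠ f m - 1 := by omega
    rcases eq_or_ne j (f m + 1) with hj | hj
    · subst hj
      rw [coef, if_neg (by omega), if_pos rfl, hup]
    · rcases eq_or_ne j (f m - 1) with hj' | hj'
      · subst hj'
        rw [coef, if_neg (by omega), if_neg hj, if_pos rfl, hdown]
      · rw [coef, if_neg (by omega), if_neg hj, if_neg hj', zero_mul]
        set D := {ω | X (m + 1) ω = f m + 1} ∪ {ω | X (m + 1) ω = f m - 1} with hD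
        have hDm : MeasurableSet D :=
          (hX.meas (m+1) (measurableSet_singleton _)).union
            (hX.meas (m+1) (measurableSet_singleton _))
        have hDC : μ (D ∩ C) = μ C := by
          rw [hD, Set.union_inter_distrib_right, measure_union, hup, hdown,
            ← add_mul, ← ENNReal.ofReal_add (le_of_lt hrn.1) (by linarith [hrn.2]),
            (by ring : r (f m) + (1 - r (f m)) = 1), ENNReal.ofReal_one, one_mul]
          · exact Set.disjoint_left.mpr (fun ω ⟨h1, _⟩ ⟨h2, _⟩ => hne' (h1.symm.trans h2))
          · exact (hX.meas (m+1) (measurableSet_singleton _)).inter hC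
        have hd : μ (C \ D) = 0 := by
          have := measure_inter_add_diff (μ := μ) C hDm
          rw [Set.inter_comm] at hDC
          rw [hDC] at this
          exact (ENNReal.add_right_inj (measure_ne_top μ C)).mp (by rw [this, add_zero])
        refine measure_mono_null (fun ω hω => ?_) hd
        refine ⟨hω.2, fun h => ?_⟩
        rcases h with h | h
        · exact hj (hω.1.symm ▸ h)
        · exact hj' (hω.1.symm ▸ h)

lemma step_inter (hX : IsBirthDeathChain μ X r k) (hr : ∀ n, 1 ≤ n → r n ∈ Set.Ioo (0 : ℝ) 1)
    (m j n : ℕ) :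
    μ ({ω | X (m + 1) ω = j} ∩ {ω | X m ω = n}) = coef r j n * μ {ω | X m ω = n} := by
  have hS : MeasurableSet {ω | X (m + 1) ω = j} := hX.meas (m+1) (measurableSet_singleton j)
  rw [hist_partition hX.meas m n _ hS]
  have hterm : ∀ v : Fin m → ℕ, μ ({ω | X (m + 1) ω = j} ∩ cylSet X m (extPath m n v))
      = coef r j n * μ (cylSet X m (extPath m n v)) := by
    intro v
    have := cyl_step hX hr m (extPath m n v) j
    rwa [extPath_last] at this
  rw [tsum_congr hterm, ENNReal.tsum_mul_left]
  congr 1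
  have := hist_partition (μ := μ) hX.meas m n Set.univ MeasurableSet.univ
  simpa using this.symm

lemma rec_all (hX : IsBirthDeathChain μ X r k) (hr : ∀ n, 1 ≤ n → r n ∈ Set.Ioo (0 : ℝ) 1)
    (m j : ℕ) :
    μ {ω | X (m + 1) ω = j} = ∑' n : ℕ, coef r j n * μ {ω | X m ω = n} := by
  have hS : MeasurableSet {ω | X (m + 1) ω = j} := hX.meas (m+1) (measurableSet_singleton j)
  rw [value_partition hX.meas m _ hS]
  exact tsum_congr (fun n => step_inter hX hr m j n)


lemma start_dist (hX : IsBirthDeathChain μ X r k) :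
    μ {ω | X 0 ω = k} = 1 ∧ ∀ n, n ≠ k → μ {ω | X 0 ω = n} = 0 := by
  haveI := hX.isProb
  have h0 : μ {ω | ¬ X 0 ω = k} = 0 := by
    rw [← ae_iff]; exact hX.start
  constructor
  · have : {ω | X 0 ω = k} =ᵐ[μ] (Set.univ : Set Ω) := by
      rw [Filter.eventuallyEq_univ]
      exact hX.start
    rw [measure_congr this, measure_univ]
  · intro n hn
    refine measure_mono_null (fun ω hω => ?_) h0
    exact fun h => hn (hω ▸ h)

lemma rec0 (hX : IsBirthDeathChain μ X r k) (hr : ∀ n, 1 ≤ n → r n ∈ Set.Ioo (0 : ℝ) 1)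
    (m : ℕ) : μ {ω | X (m + 1) ω = 0}
      = μ {ω | X m ω = 0} + ENNReal.ofReal (1 - r 1) * μ {ω | X m ω = 1} := by
  rw [rec_all hX hr, tsum_eq_sum (s := {0, 1}) ?_]
  · simp [coef]
  · intro n hn
    simp only [Finset.mem_insert, Finset.mem_singleton] at hn
    push_neg at hn
    have : coef r 0 n = 0 := by
      rw [coef, if_neg hn.1, if_neg (by omega), if_neg (by omega)]
    rw [this, zero_mul]

lemma rec1 (hX : IsBirthDeathChain μ X r k) (hr : ∀ n, 1 ≤ n → r n ∈ Set.Ioo (0 : ℝ) 1)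
    (m : ℕ) : μ {ω | X (m + 1) ω = 1}
      = ENNReal.ofReal (1 - r 2) * μ {ω | X m ω = 2} := by
  rw [rec_all hX hr, tsum_eq_sum (s := {2}) ?_]
  · simp [coef]
  · intro n hn
    simp only [Finset.mem_singleton] at hn
    have : coef r 1 n = 0 := by
      rcases eq_or_ne n 0 with h | h
      · rw [coef, if_pos h, if_neg (by omega)]
      · rw [coef, if_neg h, if_neg (by omega), if_neg (by omega)]
    rw [this, zero_mul]

lemma rec2 (hX : IsBirthDeathChain μ X r k) (hr : ∀ n, 1 ≤ n → r n ∈ Set.Ioo (0 : ℝ) 1)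
    (m j : ℕ) : μ {ω | X (m + 1) ω = j + 2}
      = ENNReal.ofReal (r (j + 1)) * μ {ω | X m ω = j + 1}
        + ENNReal.ofReal (1 - r (j + 3)) * μ {ω | X m ω = j + 3} := by
  rw [rec_all hX hr, tsum_eq_sum (s := {j+1, j+3}) ?_]
  · have h1 : coef r (j+2) (j+1) = ENNReal.ofReal (r (j+1)) := by
      rw [coef, if_neg (by omega), if_pos (by omega)]
    have h2 : coef r (j+2) (j+3) = ENNReal.ofReal (1 - r (j+3)) := by
      rw [coef, if_neg (by omega), if_neg (by omega), if_pos (by omega)]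
    rw [Finset.sum_insert (by simp), Finset.sum_singleton, h1, h2]
  · intro n hn
    simp only [Finset.mem_insert, Finset.mem_singleton] at hn
    push_neg at hn
    have : coef r (j+2) n = 0 := by
      rcases eq_or_ne n 0 with h | h
      · rw [coef, if_pos h, if_neg (by omega)]
      · rw [coef, if_neg h, if_neg (by omega), if_neg (by omega)]
    rw [this, zero_mul]

lemma Psupp (hX : IsBirthDeathChain μ X r k) (hr : ∀ n, 1 ≤ n → r n ∈ Set.Ioo (0 : ℝ) 1) :
    ∀ m n, k + m < n → μ {ω | X m ω = n} = 0 := by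
  intro m
  induction m with
  | zero =>
    intro n hn
    exact (start_dist hX).2 n (by omega)
  | succ m ih =>
    intro n hn
    obtain ⟨j, rfl⟩ : ∃ j, n = j + 2 := ⟨n - 2, by omega⟩
    rw [rec2 hX hr, ih (j+1) (by omega), ih (j+3) (by omega), mul_zero, mul_zero, add_zero]

lemma ae_bound (hX : IsBirthDeathChain μ X r k) (hr : ∀ n, 1 ≤ n → r n ∈ Set.Ioo (0 : ℝ) 1)
    (m : ℕ) : ∀ᵐ ω ∂μ, X m ω ≤ k + m := by
  rw [ae_iff]
  have hcov : {ω | ¬ X m ω ≤ k + m} = ⋃ n : ℕ, {ω | X m ω = k + m + 1 + n} := by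
    ext ω
    simp only [Set.mem_setOf_eq, Set.mem_iUnion, not_le]
    exact ⟨fun h => ⟨X m ω - (k + m + 1), by omega⟩, fun ⟨n, h⟩ => by omega⟩
  rw [hcov]
  exact measure_iUnion_null (fun n => Psupp hX hr m _ (by omega))

lemma integral_eq (hX : IsBirthDeathChain μ X r k) (hr : ∀ n, 1 ≤ n → r n ∈ Set.Ioo (0 : ℝ) 1)
    (m : ℕ) : ∫ ω, (X m ω : ℝ) ∂μ
      = ∑ n ∈ Finset.range (k + m + 1), (n : ℝ) * (μ {ω | X m ω = n}).toReal := by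
  haveI := hX.isProb
  have hmeas : ∀ n : ℕ, MeasurableSet {ω | X m ω = n} :=
    fun n => hX.meas m (measurableSet_singleton n)
  have heq : (fun ω => (X m ω : ℝ)) =ᵐ[μ] fun ω =>
      ∑ n ∈ Finset.range (k + m + 1),
        Set.indicator {ω' | X m ω' = n} (fun _ => (n : ℝ)) ω := by
    filter_upwards [ae_bound hX hr m] with ω hω
    have h1 : ∀ n, Set.indicator {ω' | X m ω' = n} (fun _ => (n : ℝ)) ω
        = if X m ω = n then (n : ℝ) else 0 := by
      intro n; simp [Set.indicator_apply, Set.mem_setOf_eq]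
    rw [Finset.sum_congr rfl (fun n _ => h1 n), Finset.sum_ite_eq,
      if_pos (Finset.mem_range.mpr (by omega))]
  rw [integral_congr_ae heq, integral_finset_sum]
  · refine Finset.sum_congr rfl (fun n _ => ?_)
    rw [integral_indicator_const _ (hmeas n), smul_eq_mul, mul_comm, measureReal_def]
  · exact fun n _ => (integrable_const ((n : ℝ))).indicator (hmeas n)

end BDC

lemma shift2 (g : ℕ → ℝ) (L : ℕ) (hL : g L = 0) (hL1 : g (L+1) = 0) :
    ∑ i ∈ Finset.range L, g (i+2) = (∑ i ∈ Finset.range L, g i) - g 1 - g 0 := by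
  have h1 : ∑ i ∈ Finset.range (L+2), g i
      = (∑ i ∈ Finset.range L, g (i+2)) + g 1 + g 0 := by
    rw [Finset.sum_range_succ' g (L+1), Finset.sum_range_succ' (fun i => g (i+1)) L]
  have h2 : ∑ i ∈ Finset.range (L+2), g i
      = (∑ i ∈ Finset.range L, g i) + g L + g (L+1) := by
    rw [Finset.sum_range_succ, Finset.sum_range_succ]
  rw [hL, hL1] at h2
  linarith

lemma master (r : ℕ → ℝ) (q q' : ℕ → ℝ) (L : ℕ)
    (hsupp : ∀ n, L ≤ n → q n = 0)
    (h0 : q' 0 = q 0 + (1 - r 1) * q 1)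
    (h1 : q' 1 = (1 - r 2) * q 2)
    (h2 : ∀ j, q' (j + 2) = r (j+1) * q (j+1) + (1 - r (j+3)) * q (j+3))
    (w : ℕ → ℝ) :
    ∑ n ∈ Finset.range (L + 2), w n * q' n
      = w 0 * q 0 + ∑ i ∈ Finset.range L,
          ((1 - r (i+1)) * w i + r (i+1) * w (i+2)) * q (i+1) := by
  set g : ℕ → ℝ := fun i => w i * ((1 - r (i+1)) * q (i+1)) with hg
  have e1 : ∑ n ∈ Finset.range (L+2), w n * q' n
      = (∑ i ∈ Finset.range L, w (i+2) * q' (i+2)) + w 1 * q' 1 + w 0 * q' 0 := by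
    rw [Finset.sum_range_succ' (fun n => w n * q' n) (L+1),
      Finset.sum_range_succ' (fun i => w (i+1) * q' (i+1)) L]
  have e2 : ∑ i ∈ Finset.range L, w (i+2) * q' (i+2)
      = (∑ i ∈ Finset.range L, w (i+2) * (r (i+1) * q (i+1))) +
        ∑ i ∈ Finset.range L, g (i+2) := by
    rw [← Finset.sum_add_distrib]
    refine Finset.sum_congr rfl (fun i _ => ?_)
    rw [h2 i, hg]; ring
  have e3 : ∑ i ∈ Finset.range L, g (i+2)
      = (∑ i ∈ Finset.range L, g i) - g 1 - g 0 := by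
    refine shift2 g L ?_ ?_
    · simp only [hg, hsupp (L+1) (by omega), mul_zero]
    · simp only [hg, hsupp (L+2) (by omega), mul_zero]
  have e4 : ∑ i ∈ Finset.range L,
      ((1 - r (i+1)) * w i + r (i+1) * w (i+2)) * q (i+1)
      = (∑ i ∈ Finset.range L, w (i+2) * (r (i+1) * q (i+1))) +
        ∑ i ∈ Finset.range L, g i := by
    rw [← Finset.sum_add_distrib]
    refine Finset.sum_congr rfl (fun i _ => ?_)
    rw [hg]; ring
  have hg0 : g 0 = w 0 * ((1 - r 1) * q 1) := rfl
  have hg1 : g 1 = w 1 * ((1 - r 2) * q 2) := rfl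
  rw [e1, e2, e3, e4, h0, h1, hg0, hg1]; ring

section Analysis

variable (r t : ℕ → ℝ) (k : ℕ) (q : ℕ → ℕ → ℝ)

lemma analysis_main (hk : 1 ≤ k)
    (hr : ∀ n, 1 ≤ n → r n ∈ Set.Ioo (0 : ℝ) 1)
    (ht : ∀ n, t n = ∏ i ∈ Finset.Icc 1 n, ((1 - r i) / r i))
    (tinf : ℝ) (htinf : 0 < tinf) (hlim : Tendsto t atTop (nhds tinf))
    (hqnn : ∀ m n, 0 ≤ q m n)
    (hq0k : q 0 k = 1) (hq0 : ∀ n, n ≠ k → q 0 n = 0)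
    (hqsupp : ∀ m n, k + m < n → q m n = 0)
    (hrec0 : ∀ m, q (m+1) 0 = q m 0 + (1 - r 1) * q m 1)
    (hrec1 : ∀ m, q (m+1) 1 = (1 - r 2) * q m 2)
    (hrec2 : ∀ m j, q (m+1) (j+2) = r (j+1) * q m (j+1) + (1 - r (j+3)) * q m (j+3)) :
    Tendsto (fun m => ∑ n ∈ Finset.range (k+m+1), (n:ℝ) * q m n) atTop
      (nhds ((∑ j ∈ Finset.range k, t j) / tinf)) := by
  -- basic facts on t
  have htpos : ∀ n, 0 < t n := by
    intro n
    rw [ht n]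
    refine Finset.prod_pos (fun i hi => ?_)
    have hi1 : 1 ≤ i := (Finset.mem_Icc.mp hi).1
    have := hr i hi1
    exact div_pos (by linarith [this.2]) this.1
  have hstep : ∀ n, r (n+1) * t (n+1) = (1 - r (n+1)) * t n := by
    intro n
    have hrn := hr (n+1) (by omega)
    have : t (n+1) = t n * ((1 - r (n+1)) / r (n+1)) := by
      rw [ht (n+1), ht n, ← Finset.prod_Icc_succ_top (by omega : 1 ≤ n + 1)]
    have hrne : r (n+1) ≠ 0 := ne_of_gt hrn.1
    rw [this, show r (n+1) * (t n * ((1 - r (n+1)) / r (n+1)))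
        = (r (n+1) / r (n+1)) * ((1 - r (n+1)) * t n) by ring,
      div_self hrne, one_mul]
  set h : ℕ → ℝ := fun n => ∑ j ∈ Finset.range n, t j with hh
  have hhsucc : ∀ n, h (n+1) = h n + t n := by
    intro n; rw [hh]; simp [Finset.sum_range_succ]
  have hharm : ∀ n, (1 - r (n+1)) * h n + r (n+1) * h (n+2) = h (n+1) := by
    intro n
    have e1 : h (n+1) = h n + t n := hhsucc n
    have e2 : h (n+2) = h (n+1) + t (n+1) := hhsucc (n+1)
    have e3 := hstep n
    rw [e2, e1]
    linarith [e3]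
  have hhnn : ∀ n, 0 ≤ h n := by
    intro n; rw [hh]
    exact Finset.sum_nonneg (fun j _ => le_of_lt (htpos j))
  have hhmono : ∀ a b, a ≤ b → h a ≤ h b := by
    intro a b hab
    exact Finset.sum_le_sum_of_subset_of_nonneg
      (Finset.range_subset_range.mpr hab) (fun j _ _ => le_of_lt (htpos j))
  -- step formulas
  have hsupp' : ∀ m n, k + m + 1 ≤ n → q m n = 0 := fun m n hn => hqsupp m n (by omega)
  have Tstep : ∀ m (w : ℕ → ℝ), ∑ n ∈ Finset.range (k+m+2), w n * q (m+1) n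
      = w 0 * q m 0 + ∑ i ∈ Finset.range (k+m+1),
          ((1 - r (i+1)) * w i + r (i+1) * w (i+2)) * q m (i+1) := by
    intro m w
    have hM := master r (q m) (q (m+1)) (k+m+1) (hsupp' m) (hrec0 m) (hrec1 m) (hrec2 m) w
    have hpad : ∑ n ∈ Finset.range (k+m+1+2), w n * q (m+1) n
        = (∑ n ∈ Finset.range (k+m+2), w n * q (m+1) n)
          + w (k+m+2) * q (m+1) (k+m+2) := by
      have : k+m+1+2 = (k+m+2)+1 := by ring
      rw [this, Finset.sum_range_succ]
    rw [hpad, hsupp' (m+1) (k+m+2) (by omega), mul_zero, add_zero] at hM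
    exact hM
  have Tshape : ∀ m (w : ℕ → ℝ), ∑ n ∈ Finset.range (k+m+1), w n * q m n
      = w 0 * q m 0 + ∑ i ∈ Finset.range (k+m+1), w (i+1) * q m (i+1) := by
    intro m w
    rw [Finset.sum_range_succ' (fun n => w n * q m n) (k+m)]
    rw [Finset.sum_range_succ (fun i => w (i+1) * q m (i+1)) (k+m),
      hsupp' m (k+m+1) le_rfl, mul_zero, add_zero]
    ring
  -- martingale: T m h = h k
  have Hconst : ∀ m, ∑ n ∈ Finset.range (k+m+1), h n * q m n = h k := by
    intro m
    induction m with
    | zero =>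
      rw [Finset.sum_eq_single k]
      · rw [hq0k, mul_one]
      · intro n _ hn; rw [hq0 n hn, mul_zero]
      · intro hk'; exact absurd (Finset.mem_range.mpr (by omega)) hk'
    | succ m ih =>
      rw [show k + (m+1) + 1 = k + m + 2 by omega, Tstep m h]
      have : ∑ i ∈ Finset.range (k+m+1),
          ((1 - r (i+1)) * h i + r (i+1) * h (i+2)) * q m (i+1)
          = ∑ i ∈ Finset.range (k+m+1), h (i+1) * q m (i+1) :=
        Finset.sum_congr rfl (fun i _ => by rw [hharm i])
      rw [this, ← Tshape m h, ih]
  -- Lyapunov: interior probabilities vanish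
  have hvanish : ∀ N : ℕ, 1 ≤ N → Tendsto (fun m => q m N) atTop (nhds 0) := by
    intro N hN
    obtain ⟨N', rfl⟩ : ∃ N', N = N' + 1 := ⟨N - 1, by omega⟩
    set ψ : ℕ → ℝ := fun n => h (min n (N'+1)) with hψ
    set c : ℝ := (1 - r (N'+1)) * t N' with hc
    have hrN := hr (N'+1) (by omega)
    have hcpos : 0 < c := mul_pos (by linarith [hrN.2]) (htpos N')
    have hψval : ∀ n, ψ n = h (min n (N'+1)) := fun n => rfl
    have hbr : ∀ i, (1 - r (i+1)) * ψ i + r (i+1) * ψ (i+2)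
        = ψ (i+1) - (if i = N' then c else 0) := by
      intro i
      rcases lt_trichotomy i N' with hlt | heq | hgt
      · have v0 : ψ i = h i := by
          rw [hψval i, min_eq_left (show i ≤ N'+1 by omega)]
        have v1 : ψ (i+1) = h (i+1) := by
          rw [hψval (i+1), min_eq_left (show i+1 ≤ N'+1 by omega)]
        have v2 : ψ (i+2) = h (i+2) := by
          rw [hψval (i+2), min_eq_left (show i+2 ≤ N'+1 by omega)]
        rw [if_neg (by omega), v0, v1, v2, sub_zero]
        exact hharm i
      · subst heq
        have v0 : ψ i = h i := by
          rw [hψval i, min_eq_left (show i ≤ i+1 by omega)]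
        have v1 : ψ (i+1) = h (i+1) := by
          rw [hψval (i+1), min_eq_left (show i+1 ≤ i+1 by omega)]
        have v2 : ψ (i+2) = h (i+1) := by
          rw [hψval (i+2), min_eq_right (show i+1 ≤ i+2 by omega)]
        rw [if_pos rfl, v0, v1, v2]
        have e1 := hharm i
        have e2 : h (i+2) = h (i+1) + t (i+1) := hhsucc (i+1)
        have e3 := hstep i
        rw [e2] at e1
        rw [hc]
        linarith
      · have v0 : ψ i = h (N'+1) := by
          rw [hψval i, min_eq_right (show N'+1 ≤ i by omega)]
        have v1 : ψ (i+1) = h (N'+1) := by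
          rw [hψval (i+1), min_eq_right (show N'+1 ≤ i+1 by omega)]
        have v2 : ψ (i+2) = h (N'+1) := by
          rw [hψval (i+2), min_eq_right (show N'+1 ≤ i+2 by omega)]
        rw [if_neg (by omega), v0, v1, v2, sub_zero]
        ring
    have hTpre : ∀ m, ∑ n ∈ Finset.range (k+m+2), ψ n * q (m+1) n
        = (∑ n ∈ Finset.range (k+m+1), ψ n * q m n) - c * q m (N'+1) := by
      intro m
      rw [Tstep m ψ]
      have e : ∑ i ∈ Finset.range (k+m+1),
          ((1 - r (i+1)) * ψ i + r (i+1) * ψ (i+2)) * q m (i+1)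
          = (∑ i ∈ Finset.range (k+m+1), ψ (i+1) * q m (i+1))
            - ∑ i ∈ Finset.range (k+m+1), (if i = N' then c * q m (i+1) else 0) := by
        rw [← Finset.sum_sub_distrib]
        refine Finset.sum_congr rfl fun i _ => ?_
        rw [hbr i]
        split_ifs with hi
        · ring
        · ring
      rw [e, Finset.sum_ite_eq' (Finset.range (k+m+1)) N' (fun i => c * q m (i+1))]
      by_cases hmem : N' ∈ Finset.range (k+m+1)
      · rw [if_pos hmem, Tshape m ψ]; ring
      · rw [if_neg hmem]
        have hz : q m (N'+1) = 0 := by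
          refine hsupp' m (N'+1) ?_
          simp only [Finset.mem_range, not_lt] at hmem
          omega
        rw [hz, Tshape m ψ]
        ring
    have hψnn : ∀ m, 0 ≤ ∑ n ∈ Finset.range (k+m+1), ψ n * q m n :=
      fun m => Finset.sum_nonneg fun n _ => mul_nonneg (hhnn _) (hqnn m n)
    have htel : ∀ M, (∑ n ∈ Finset.range (k+M+1), ψ n * q M n)
        = (∑ n ∈ Finset.range (k+0+1), ψ n * q 0 n)
          - c * ∑ m ∈ Finset.range M, q m (N'+1) := by
      intro M
      induction M with
      | zero => simp
      | succ M ih =>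
        rw [show k + (M+1) + 1 = k + M + 2 by omega, hTpre M, ih,
          Finset.sum_range_succ (fun m => q m (N'+1)) M]
        ring
    have hbdd : ∀ M, ∑ m ∈ Finset.range M, q m (N'+1)
        ≤ (∑ n ∈ Finset.range (k+0+1), ψ n * q 0 n) / c := by
      intro M
      rw [le_div_iff₀ hcpos]
      have h1 := htel M
      have h2 := hψnn M
      linarith [mul_comm (∑ m ∈ Finset.range M, q m (N'+1)) c]
    exact (summable_of_sum_range_le (fun m => hqnn m (N'+1)) hbdd).tendsto_atTop_zero
  -- uniform lower bound on t
  have hδex : ∃ δ : ℝ, 0 < δ ∧ ∀ j, δ ≤ t j := by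
    have h2 : ∀ᶠ j in atTop, tinf/2 < t j :=
      hlim.eventually (eventually_gt_nhds (by linarith))
    obtain ⟨N₀, hN₀⟩ := eventually_atTop.mp h2
    set F := insert (tinf/2) ((Finset.range N₀).image t) with hF
    have hFne : F.Nonempty := ⟨tinf/2, Finset.mem_insert_self _ _⟩
    have hFpos : ∀ x ∈ F, 0 < x := by
      intro x hx
      rcases Finset.mem_insert.mp hx with hcase | hcase
      · rw [hcase]; linarith
      · obtain ⟨j, _, hj⟩ := Finset.mem_image.mp hcase
        rw [← hj]; exact htpos j
    refine ⟨F.min' hFne, hFpos _ (Finset.min'_mem F hFne), ?_⟩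
    · intro j
      by_cases hj : j < N₀
      · exact Finset.min'_le F (t j)
          (Finset.mem_insert_of_mem (Finset.mem_image.mpr ⟨j, Finset.mem_range.mpr hj, rfl⟩))
      · calc F.min' hFne ≤ tinf/2 := Finset.min'_le F _ (Finset.mem_insert_self _ _)
          _ ≤ t j := le_of_lt (hN₀ j (by omega))
  obtain ⟨δ, hδpos, hδle⟩ := hδex
  have hhn : ∀ n : ℕ, δ * n ≤ h n := by
    intro n
    calc δ * n = ∑ _j ∈ Finset.range n, δ := by
          rw [Finset.sum_const, Finset.card_range, nsmul_eq_mul]; ring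
      _ ≤ h n := Finset.sum_le_sum (fun j _ => hδle j)
  have hE : ∀ m, ∑ n ∈ Finset.range (k+m+1), (n:ℝ) * q m n ≤ h k / δ := by
    intro m
    have step1 : ∑ n ∈ Finset.range (k+m+1), (n:ℝ) * q m n
        ≤ ∑ n ∈ Finset.range (k+m+1), (h n / δ) * q m n := by
      refine Finset.sum_le_sum fun n _ => mul_le_mul_of_nonneg_right ?_ (hqnn m n)
      rw [le_div_iff₀ hδpos, mul_comm]
      exact hhn n
    have step2 : ∑ n ∈ Finset.range (k+m+1), (h n / δ) * q m n
        = (∑ n ∈ Finset.range (k+m+1), h n * q m n) / δ := by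
      rw [Finset.sum_div]
      exact Finset.sum_congr rfl fun n _ => by ring
    rw [step2, Hconst m] at step1
    exact step1
  -- difference representation
  set g : ℕ → ℝ := fun n => (n:ℝ) - h n / tinf with hgdef
  have hdiff : ∀ m, (∑ n ∈ Finset.range (k+m+1), (n:ℝ) * q m n) - h k / tinf
      = ∑ n ∈ Finset.range (k+m+1), g n * q m n := by
    intro m
    have e : ∑ n ∈ Finset.range (k+m+1), g n * q m n
        = (∑ n ∈ Finset.range (k+m+1), (n:ℝ) * q m n)
          - (∑ n ∈ Finset.range (k+m+1), h n * q m n) / tinf := by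
      rw [Finset.sum_div, ← Finset.sum_sub_distrib]
      exact Finset.sum_congr rfl fun n _ => by rw [hgdef]; ring
    rw [e, Hconst m]
  have hg0 : g 0 = 0 := by
    rw [hgdef]
    simp [hh]
  have hs0 : Tendsto (fun j => |1 - t j / tinf|) atTop (nhds 0) := by
    have h1 : Tendsto (fun j => 1 - t j / tinf) atTop (nhds (1 - tinf/tinf)) :=
      tendsto_const_nhds.sub (hlim.div_const tinf)
    rw [div_self (ne_of_gt htinf), sub_self] at h1
    have := h1.abs
    simpa using this
  have hgabs : ∀ n, |g n| ≤ ∑ j ∈ Finset.range n, |1 - t j / tinf| := by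
    intro n
    have e : g n = ∑ j ∈ Finset.range n, (1 - t j / tinf) := by
      rw [hgdef]
      simp only [hh]
      rw [Finset.sum_sub_distrib, ← Finset.sum_div]
      simp
    rw [e]
    exact Finset.abs_sum_le_sum_abs _ _
  -- final epsilon argument
  rw [Metric.tendsto_atTop]
  intro ε hε
  have hA : (0:ℝ) ≤ h k / δ := div_nonneg (hhnn k) (le_of_lt hδpos)
  set ε' : ℝ := ε / (2 * (h k / δ + 1)) with hε'
  have hε'pos : 0 < ε' := div_pos hε (by positivity)
  obtain ⟨N₁, hN₁⟩ := (Metric.tendsto_atTop.mp hs0) (ε'/2) (by positivity)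
  set C₂ : ℝ := ∑ j ∈ Finset.range N₁, |1 - t j / tinf| with hC₂
  have hC₂nn : 0 ≤ C₂ := Finset.sum_nonneg fun j _ => abs_nonneg _
  obtain ⟨N₂, hN₂⟩ := exists_nat_ge (2 * C₂ / ε')
  set N : ℕ := max N₁ N₂ with hNdef
  have hgN : ∀ n, N ≤ n → |g n| ≤ ε' * n := by
    intro n hn
    have hn₁ : N₁ ≤ n := le_trans (le_max_left _ _) hn
    have hn₂ : N₂ ≤ n := le_trans (le_max_right _ _) hn
    have hsplit : ∑ j ∈ Finset.range n, |1 - t j / tinf|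
        = C₂ + ∑ j ∈ Finset.Ico N₁ n, |1 - t j / tinf| := by
      rw [hC₂, Finset.range_eq_Ico, Finset.range_eq_Ico]
      exact (Finset.sum_Ico_consecutive _ (Nat.zero_le N₁) hn₁).symm
    have htail : ∑ j ∈ Finset.Ico N₁ n, |1 - t j / tinf| ≤ (n : ℝ) * (ε'/2) := by
      calc ∑ j ∈ Finset.Ico N₁ n, |1 - t j / tinf|
          ≤ ∑ _j ∈ Finset.Ico N₁ n, (ε'/2) := by
            refine Finset.sum_le_sum fun j hj => ?_
            have := hN₁ j (le_trans (Finset.mem_Ico.mp hj).1 le_rfl)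
            rw [Real.dist_eq, sub_zero, abs_abs] at this
            exact le_of_lt this
        _ = ((n - N₁ : ℕ) : ℝ) * (ε'/2) := by
            rw [Finset.sum_const, Nat.card_Ico, nsmul_eq_mul]
        _ ≤ (n : ℝ) * (ε'/2) := by
            have : ((n - N₁ : ℕ) : ℝ) ≤ (n : ℝ) := by
              exact_mod_cast Nat.sub_le n N₁
            exact mul_le_mul_of_nonneg_right this (by positivity)
    have hC₂le : C₂ ≤ (n : ℝ) * (ε'/2) := by
      have h1 : 2 * C₂ / ε' ≤ (n : ℝ) := le_trans hN₂ (by exact_mod_cast hn₂)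
      rw [div_le_iff₀ hε'pos] at h1
      linarith
    calc |g n| ≤ ∑ j ∈ Finset.range n, |1 - t j / tinf| := hgabs n
      _ = C₂ + ∑ j ∈ Finset.Ico N₁ n, |1 - t j / tinf| := hsplit
      _ ≤ (n : ℝ) * (ε'/2) + (n : ℝ) * (ε'/2) := add_le_add hC₂le htail
      _ = ε' * n := by ring
  set B : ℝ := ∑ n ∈ Finset.range N, |g n| with hB
  have hBnn : 0 ≤ B := Finset.sum_nonneg fun n _ => abs_nonneg _
  have hgB : ∀ n, n < N → |g n| ≤ B :=
    fun n hn => Finset.single_le_sum (f := fun i => |g i|)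
      (fun i _ => abs_nonneg _) (Finset.mem_range.mpr hn)
  set u : ℕ → ℝ := fun m => ∑ n ∈ Finset.Ico 1 N, q m n with hu
  have hunn : ∀ m, 0 ≤ u m := fun m => Finset.sum_nonneg fun n _ => hqnn m n
  have hu0 : Tendsto u atTop (nhds 0) := by
    have h1 : Tendsto (fun m => ∑ n ∈ Finset.Ico 1 N, q m n) atTop
        (nhds (∑ n ∈ Finset.Ico 1 N, (0:ℝ))) :=
      tendsto_finset_sum _ (fun n hn => hvanish n (Finset.mem_Ico.mp hn).1)
    simpa using h1
  obtain ⟨M₀, hM₀⟩ := (Metric.tendsto_atTop.mp hu0) (ε/(2*(B+1))) (by positivity)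
  refine ⟨M₀, fun m hm => ?_⟩
  rw [Real.dist_eq, hdiff m]
  have key : |∑ n ∈ Finset.range (k+m+1), g n * q m n| ≤ B * u m + ε' * (h k / δ) := by
    calc |∑ n ∈ Finset.range (k+m+1), g n * q m n|
        ≤ ∑ n ∈ Finset.range (k+m+1), |g n| * q m n := by
          refine le_trans (Finset.abs_sum_le_sum_abs _ _) (le_of_eq ?_)
          exact Finset.sum_congr rfl fun n _ => by
            rw [abs_mul, abs_of_nonneg (hqnn m n)]
      _ ≤ ∑ n ∈ Finset.range (k+m+1),
            ((if n ∈ Finset.Ico 1 N then B else 0) + ε' * n) * q m n := by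
          refine Finset.sum_le_sum fun n _ => mul_le_mul_of_nonneg_right ?_ (hqnn m n)
          by_cases hn : n ∈ Finset.Ico 1 N
          · rw [if_pos hn]
            have := hgB n (Finset.mem_Ico.mp hn).2
            have hnn : (0:ℝ) ≤ ε' * n := by positivity
            linarith
          · rw [if_neg hn, zero_add]
            rcases Nat.eq_zero_or_pos n with h0 | hpos
            · subst h0; rw [hg0]; simp
            · have : N ≤ n := by
                simp only [Finset.mem_Ico, not_and, not_lt] at hn
                exact hn hpos
              exact hgN n this
      _ = (∑ n ∈ Finset.range (k+m+1), (if n ∈ Finset.Ico 1 N then B * q m n else 0))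
          + ε' * ∑ n ∈ Finset.range (k+m+1), (n:ℝ) * q m n := by
          rw [Finset.mul_sum, ← Finset.sum_add_distrib]
          refine Finset.sum_congr rfl fun n _ => ?_
          split_ifs with hn
          · ring
          · ring
      _ ≤ B * u m + ε' * (h k / δ) := by
          refine add_le_add ?_ (mul_le_mul_of_nonneg_left (hE m) (le_of_lt hε'pos))
          rw [Finset.sum_ite_mem, hu, Finset.mul_sum]
          refine Finset.sum_le_sum_of_subset_of_nonneg
            (Finset.inter_subset_right) ?_
          intro n _ _
          exact mul_nonneg hBnn (hqnn m n)
  have hum : u m < ε/(2*(B+1)) := by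
    have := hM₀ m hm
    rwa [Real.dist_eq, sub_zero, abs_of_nonneg (hunn m)] at this
  have h1 : B * u m < ε/2 := by
    have h2 : B * u m ≤ B * (ε/(2*(B+1))) :=
      mul_le_mul_of_nonneg_left (le_of_lt hum) hBnn
    have h3 : B * (ε/(2*(B+1))) < ε/2 := by
      rw [show B * (ε/(2*(B+1))) = (B*ε)/(2*(B+1)) by ring,
        div_lt_div_iff₀ (by positivity) (by norm_num : (0:ℝ) < 2)]
      nlinarith [hε]
    linarith
  have h4 : ε' * (h k / δ) < ε/2 := by
    rw [show ε' * (h k / δ) = (ε * (h k / δ))/(2*(h k / δ + 1)) by rw [hε']; ring,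
      div_lt_div_iff₀ (by positivity) (by norm_num : (0:ℝ) < 2)]
    nlinarith [hε, hA]
  calc |∑ n ∈ Finset.range (k+m+1), g n * q m n| ≤ B * u m + ε' * (h k / δ) := key
    _ < ε := by linarith

end Analysis


/-- If `tₙ = (l₁⋯lₙ)/(r₁⋯rₙ)` converges to a finite positive limit `t_∞`, then the expected
value of the chain converges to `(∑_{j=0}^{k−1} tⱼ)/t_∞`. -/
theorem expected_value_tendsto {Ω : Type*} [MeasurableSpace Ω] (μ : Measure Ω)
    (X : ℕ → Ω → ℕ) (r : ℕ → ℝ) (k : ℕ) (hk : 1 ≤ k)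
    (hr : ∀ n, 1 ≤ n → r n ∈ Set.Ioo (0 : ℝ) 1)
    (hX : IsBirthDeathChain μ X r k)
    (t : ℕ → ℝ) (ht : ∀ n, t n = ∏ i ∈ Finset.Icc 1 n, ((1 - r i) / r i))
    (tinf : ℝ) (htinf : 0 < tinf) (hlim : Tendsto t atTop (nhds tinf)) :
    Tendsto (fun m => ∫ ω, (X m ω : ℝ) ∂μ) atTop
      (nhds ((∑ j ∈ Finset.range k, t j) / tinf)) := by

  haveI := hX.isProb
  set q : ℕ → ℕ → ℝ := fun m n => (μ {ω | X m ω = n}).toReal with hq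
  have hfin : ∀ m n, μ {ω | X m ω = n} ≠ ⊤ := fun m n => measure_ne_top μ _
  have hqnn : ∀ m n, 0 ≤ q m n := fun m n => ENNReal.toReal_nonneg
  have hq0k : q 0 k = 1 := by rw [hq]; simp only; rw [(BDC.start_dist hX).1]; simp
  have hq0 : ∀ n, n ≠ k → q 0 n = 0 := by
    intro n hn
    rw [hq]; simp only; rw [(BDC.start_dist hX).2 n hn]; simp
  have hqsupp : ∀ m n, k + m < n → q m n = 0 := by
    intro m n hn
    rw [hq]; simp only; rw [BDC.Psupp hX hr m n hn]; simp
  have hrec0 : ∀ m, q (m+1) 0 = q m 0 + (1 - r 1) * q m 1 := by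
    intro m
    have h1 : (0:ℝ) ≤ 1 - r 1 := by linarith [(hr 1 le_rfl).2]
    rw [hq]; simp only
    rw [BDC.rec0 hX hr m,
      ENNReal.toReal_add (hfin m 0) (ENNReal.mul_ne_top ENNReal.ofReal_ne_top (hfin m 1)),
      ENNReal.toReal_mul, ENNReal.toReal_ofReal h1]
  have hrec1 : ∀ m, q (m+1) 1 = (1 - r 2) * q m 2 := by
    intro m
    have h1 : (0:ℝ) ≤ 1 - r 2 := by linarith [(hr 2 (by omega)).2]
    rw [hq]; simp only
    rw [BDC.rec1 hX hr m, ENNReal.toReal_mul, ENNReal.toReal_ofReal h1]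
  have hrec2 : ∀ m j, q (m+1) (j+2) = r (j+1) * q m (j+1) + (1 - r (j+3)) * q m (j+3) := by
    intro m j
    have h1 : (0:ℝ) ≤ r (j+1) := le_of_lt (hr (j+1) (by omega)).1
    have h2 : (0:ℝ) ≤ 1 - r (j+3) := by linarith [(hr (j+3) (by omega)).2]
    rw [hq]; simp only
    rw [BDC.rec2 hX hr m j,
      ENNReal.toReal_add (ENNReal.mul_ne_top ENNReal.ofReal_ne_top (hfin m (j+1)))
        (ENNReal.mul_ne_top ENNReal.ofReal_ne_top (hfin m (j+3))),
      ENNReal.toReal_mul, ENNReal.toReal_mul, ENNReal.toReal_ofReal h1,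
      ENNReal.toReal_ofReal h2]
  have hmain := analysis_main r t k q hk hr ht tinf htinf hlim hqnn hq0k hq0 hqsupp
    hrec0 hrec1 hrec2
  refine hmain.congr (fun m => ?_)
  rw [BDC.integral_eq hX hr m]
end

section
/- Let (X_m) be a birth-death chain on ℕ started at k ≥ 1 with up-probabilities r_n, down-probabilities l_n = 1 − r_n from n ≥ 1, and 0 absorbing. If lim_{n→∞} (l_1⋯l_n)/(r_1⋯r_n) = 0, then E[X_m] → ∞ as m → ∞. -/
open MeasureTheory ProbabilityTheory Filter Set

open scoped ENNReal

section helpers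

variable {Ω : Type*} [MeasurableSpace Ω] (μ : Measure Ω)

lemma cond_inter [IsFiniteMeasure μ] {S T : Set Ω} (hS : MeasurableSet S) (c : ℝ≥0∞)
    (h : μ S ≠ 0 → μ[T | S] = c) : μ (T ∩ S) = c * μ S := by
  by_cases h0 : μ S = 0
  · have h1 : μ (T ∩ S) ≤ μ S := measure_mono inter_subset_right
    rw [h0] at h1
    rw [le_zero_iff.mp h1, h0, mul_zero]
  · have hc := h h0
    rw [cond_apply hS μ T] at hc
    have hfin : μ S ≠ ⊤ := measure_ne_top μ S
    rw [inter_comm, ← hc, mul_comm ((μ S)⁻¹) (μ (S ∩ T)), mul_assoc,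
      ENNReal.inv_mul_cancel h0 hfin, mul_one]

lemma meas_inter_eq (X : ℕ → Ω → ℕ) (hmeas : ∀ m, Measurable (X m))
    [IsFiniteMeasure μ] (m x : ℕ) (T : Set Ω) (hT : MeasurableSet T) (c : ℝ≥0∞)
    (hstep : ∀ p : ℕ → ℕ, p m = x →
      μ (⋂ i ∈ Finset.range (m+1), {ω | X i ω = p i}) ≠ 0 →
      μ[T | ⋂ i ∈ Finset.range (m+1), {ω | X i ω = p i}] = c) :
    μ (T ∩ {ω | X m ω = x}) = c * μ {ω | X m ω = x} := by
  classical
  set I := {v : Fin (m+1) → ℕ // v (Fin.last m) = x} with hI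
  set D : I → Set Ω := fun v => ⋂ i : Fin (m+1), {ω | X i ω = v.1 i} with hD
  have hDm : ∀ v, MeasurableSet (D v) := by
    intro v
    exact MeasurableSet.iInter fun i => (hmeas i) (measurableSet_singleton (v.1 i))
  have key : ∀ v : I, μ (T ∩ D v) = c * μ (D v) := by
    intro v
    set p : ℕ → ℕ := fun i => if h : i < m+1 then v.1 ⟨i, h⟩ else 0 with hp
    have hpm : p m = x := by
      simp only [hp, dif_pos (Nat.lt_succ_self m)]
      exact v.2
    have hCD : (⋂ i ∈ Finset.range (m+1), {ω | X i ω = p i}) = D v := by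
      ext ω
      simp only [Set.mem_iInter, Finset.mem_range, Set.mem_setOf_eq, hD]
      constructor
      · intro hws i
        have := hws i.1 i.2
        simpa only [hp, dif_pos i.2, Fin.eta] using this
      · intro hws i hi
        have := hws ⟨i, hi⟩
        simpa only [hp, dif_pos hi] using this
    have := hstep p hpm
    rw [hCD] at this
    exact cond_inter μ (hDm v) c this
  have disjD : Pairwise (Function.onFun Disjoint (fun v : I => D v)) := by
    intro v w hvw
    have hne : v.1 ≠ w.1 := fun h => hvw (Subtype.ext h)
    rw [Function.ne_iff] at hne
    obtain ⟨i, hi⟩ := hne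
    rw [Function.onFun]
    rw [Set.disjoint_left]
    intro ω hv hw
    have h1 : X i ω = v.1 i := Set.mem_iInter.1 hv i
    have h2 : X i ω = w.1 i := Set.mem_iInter.1 hw i
    exact hi (h1 ▸ h2)
  have union : {ω | X m ω = x} = ⋃ v : I, D v := by
    ext ω
    constructor
    · intro hω
      refine Set.mem_iUnion.2 ⟨⟨fun i => X i ω, hω⟩, ?_⟩
      exact Set.mem_iInter.2 fun i => rfl
    · intro hω
      obtain ⟨v, hv⟩ := Set.mem_iUnion.1 hω
      have := Set.mem_iInter.1 hv (Fin.last m)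
      simp only [Set.mem_setOf_eq, Fin.val_last] at this
      rw [Set.mem_setOf_eq, this]
      exact v.2
  have hTD : T ∩ {ω | X m ω = x} = ⋃ v : I, (T ∩ D v) := by
    rw [union, Set.inter_iUnion]
  rw [hTD, measure_iUnion (fun v w hvw => ((disjD hvw).mono inter_subset_right inter_subset_right))
    (fun v => hT.inter (hDm v))]
  rw [union, measure_iUnion disjD hDm, ← ENNReal.tsum_mul_left]
  exact tsum_congr key

variable {X : ℕ → Ω → ℕ} {r : ℕ → ℝ} {k : ℕ}

lemma meas_state (hX : IsBirthDeathChain μ X r k) (m x : ℕ) :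
    MeasurableSet {ω | X m ω = x} :=
  (hX.meas m) (measurableSet_singleton x)

lemma up_eq (hX : IsBirthDeathChain μ X r k) (m x : ℕ) (hx : 0 < x) :
    μ ({ω | X (m+1) ω = x+1} ∩ {ω | X m ω = x})
      = ENNReal.ofReal (r x) * μ {ω | X m ω = x} := by
  haveI := hX.isProb
  refine meas_inter_eq μ X hX.meas m x _ (meas_state μ hX (m+1) (x+1)) _ ?_
  intro p hpm hne
  have := hX.step_up m p (by omega) hne
  rw [hpm] at this
  exact this

lemma down_eq (hX : IsBirthDeathChain μ X r k) (m x : ℕ) (hx : 0 < x) :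
    μ ({ω | X (m+1) ω = x-1} ∩ {ω | X m ω = x})
      = ENNReal.ofReal (1 - r x) * μ {ω | X m ω = x} := by
  haveI := hX.isProb
  refine meas_inter_eq μ X hX.meas m x _ (meas_state μ hX (m+1) (x-1)) _ ?_
  intro p hpm hne
  have := hX.step_down m p (by omega) hne
  rw [hpm] at this
  exact this

lemma absorb_eq (hX : IsBirthDeathChain μ X r k) (m : ℕ) :
    μ ({ω | X (m+1) ω = 0} ∩ {ω | X m ω = 0}) = μ {ω | X m ω = 0} := by
  haveI := hX.isProb
  have := meas_inter_eq μ X hX.meas m 0 {ω | X (m+1) ω = 0}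
    (meas_state μ hX (m+1) 0) 1 ?_
  · rw [this, one_mul]
  · intro p hpm hne
    exact hX.absorb m p hpm hne

lemma otherpos (hX : IsBirthDeathChain μ X r k)
    (hr : ∀ n, 1 ≤ n → r n ∈ Set.Ioo (0:ℝ) 1)
    (m x z : ℕ) (hx : 0 < x) (hz1 : z ≠ x+1) (hz2 : z ≠ x-1) :
    μ ({ω | X (m+1) ω = z} ∩ {ω | X m ω = x}) = 0 := by
  haveI := hX.isProb
  set B := {ω | X m ω = x} with hB
  set A1 := {ω | X (m+1) ω = x+1} ∩ B with hA1
  set A2 := {ω | X (m+1) ω = x-1} ∩ B with hA2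
  have hrx := hr x hx
  have hsum : μ A1 + μ A2 = μ B := by
    rw [hA1, hA2, up_eq μ hX m x hx, down_eq μ hX m x hx, ← add_mul,
      ← ENNReal.ofReal_add hrx.1.le (by linarith [hrx.2])]
    norm_num
    rfl
  have hdisj : Disjoint A1 A2 := by
    rw [Set.disjoint_left]
    rintro ω ⟨h1, _⟩ ⟨h2, _⟩
    rw [Set.mem_setOf_eq] at h1 h2
    omega
  have hm1 : MeasurableSet A1 := (meas_state μ hX (m+1) (x+1)).inter (meas_state μ hX m x)
  have hm2 : MeasurableSet A2 := (meas_state μ hX (m+1) (x-1)).inter (meas_state μ hX m x)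
  have hu : μ (A1 ∪ A2) = μ B := by
    rw [measure_union hdisj hm2, hsum]
  have hsub : ({ω | X (m+1) ω = z} ∩ B) ⊆ B \ (A1 ∪ A2) := by
    rintro ω ⟨h1, h2⟩
    refine ⟨h2, ?_⟩
    rw [Set.mem_setOf_eq] at h1
    rintro (⟨h3, _⟩ | ⟨h3, _⟩) <;> rw [Set.mem_setOf_eq] at h3 <;> omega
  have hdiff : μ (B \ (A1 ∪ A2)) = 0 := by
    rw [measure_diff (union_subset inter_subset_right inter_subset_right)
      (hm1.union hm2).nullMeasurableSet (measure_ne_top μ _), hu, tsub_self]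
  exact le_antisymm (le_trans (measure_mono hsub) hdiff.le) zero_le

lemma other0 (hX : IsBirthDeathChain μ X r k) (m z : ℕ) (hz : z ≠ 0) :
    μ ({ω | X (m+1) ω = z} ∩ {ω | X m ω = 0}) = 0 := by
  haveI := hX.isProb
  set B := {ω | X m ω = 0} with hB
  set A1 := {ω | X (m+1) ω = 0} ∩ B with hA1
  have hu : μ A1 = μ B := absorb_eq μ hX m
  have hm1 : MeasurableSet A1 := (meas_state μ hX (m+1) 0).inter (meas_state μ hX m 0)
  have hsub : ({ω | X (m+1) ω = z} ∩ B) ⊆ B \ A1 := by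
    rintro ω ⟨h1, h2⟩
    refine ⟨h2, ?_⟩
    rw [Set.mem_setOf_eq] at h1
    rintro ⟨h3, _⟩
    rw [Set.mem_setOf_eq] at h3
    omega
  have hdiff : μ (B \ A1) = 0 := by
    rw [measure_diff inter_subset_right hm1.nullMeasurableSet (measure_ne_top μ _), hu, tsub_self]
  exact le_antisymm (le_trans (measure_mono hsub) hdiff.le) zero_le

lemma marg_dec (hX : IsBirthDeathChain μ X r k) (m y : ℕ) :
    μ {ω | X (m+1) ω = y} = ∑' x : ℕ, μ ({ω | X (m+1) ω = y} ∩ {ω | X m ω = x}) := by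
  have hun : {ω | X (m+1) ω = y} = ⋃ x : ℕ, ({ω | X (m+1) ω = y} ∩ {ω | X m ω = x}) := by
    ext ω
    constructor
    · intro hω
      exact Set.mem_iUnion.2 ⟨X m ω, hω, rfl⟩
    · intro hω
      obtain ⟨x, hx, _⟩ := Set.mem_iUnion.1 hω
      exact hx
  conv_lhs => rw [hun]
  refine measure_iUnion ?_ (fun x => (meas_state μ hX (m+1) y).inter (meas_state μ hX m x))
  intro x x' hxx'
  rw [Function.onFun, Set.disjoint_left]
  rintro ω ⟨_, h1⟩ ⟨_, h2⟩
  rw [Set.mem_setOf_eq] at h1 h2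
  exact hxx' (h1 ▸ h2)

lemma marg_rec0 (hX : IsBirthDeathChain μ X r k)
    (hr : ∀ n, 1 ≤ n → r n ∈ Set.Ioo (0:ℝ) 1) (m : ℕ) :
    μ {ω | X (m+1) ω = 0}
      = μ {ω | X m ω = 0} + ENNReal.ofReal (1 - r 1) * μ {ω | X m ω = 1} := by
  rw [marg_dec μ hX m 0]
  rw [tsum_eq_sum (s := ({0, 1} : Finset ℕ)) ?_]
  · rw [Finset.sum_pair (by norm_num : (0:ℕ) ≠ 1)]
    congr 1
    · exact absorb_eq μ hX m
    · have := down_eq μ hX m 1 one_pos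
      norm_num at this
      exact this
  · intro x hx
    simp only [Finset.mem_insert, Finset.mem_singleton] at hx
    push_neg at hx
    exact otherpos μ hX hr m x 0 (by omega) (by omega) (by omega)

lemma marg_recpos (hX : IsBirthDeathChain μ X r k)
    (hr : ∀ n, 1 ≤ n → r n ∈ Set.Ioo (0:ℝ) 1) (m y : ℕ) (hy : 1 ≤ y) :
    μ {ω | X (m+1) ω = y}
      = (if 2 ≤ y then ENNReal.ofReal (r (y-1)) * μ {ω | X m ω = y-1} else 0)
        + ENNReal.ofReal (1 - r (y+1)) * μ {ω | X m ω = y+1} := by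
  rw [marg_dec μ hX m y]
  rw [tsum_eq_sum (s := ({y-1, y+1} : Finset ℕ)) ?_]
  · rw [Finset.sum_pair (by omega : y-1 ≠ y+1)]
    congr 1
    · by_cases h2 : 2 ≤ y
      · rw [if_pos h2]
        have := up_eq μ hX m (y-1) (by omega)
        have he : y - 1 + 1 = y := by omega
        rw [he] at this
        exact this
      · rw [if_neg h2]
        have hy1 : y = 1 := by omega
        subst hy1
        exact other0 μ hX m 1 one_ne_zero
    · have := down_eq μ hX m (y+1) (by omega)
      have he : y + 1 - 1 = y := by omega
      rw [he] at this
      exact this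
  · intro x hx
    simp only [Finset.mem_insert, Finset.mem_singleton] at hx
    push_neg at hx
    by_cases hx0 : x = 0
    · subst hx0
      exact other0 μ hX m y (by omega)
    · exact otherpos μ hX hr m x y (by omega) (by omega) (by omega)

lemma marg_start (hX : IsBirthDeathChain μ X r k) (x : ℕ) :
    μ {ω | X 0 ω = x} = if x = k then 1 else 0 := by
  haveI := hX.isProb
  have h0 : μ {ω | ¬ (X 0 ω = k)} = 0 := ae_iff.mp hX.start
  by_cases hxk : x = k
  · subst hxk
    rw [if_pos rfl]
    have hle : (1:ℝ≥0∞) ≤ μ {ω | X 0 ω = x} + μ {ω | ¬ (X 0 ω = x)} := by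
      have : (univ : Set Ω) ⊆ {ω | X 0 ω = x} ∪ {ω | ¬ (X 0 ω = x)} := by
        intro ω _
        by_cases h : X 0 ω = x
        · exact Or.inl h
        · exact Or.inr h
      calc (1:ℝ≥0∞) = μ univ := (measure_univ).symm
      _ ≤ μ ({ω | X 0 ω = x} ∪ {ω | ¬ (X 0 ω = x)}) := measure_mono this
      _ ≤ _ := measure_union_le _ _
    rw [h0, add_zero] at hle
    exact le_antisymm prob_le_one hle
  · rw [if_neg hxk]
    refine le_antisymm (le_trans (measure_mono ?_) h0.le) zero_le
    intro ω hω
    rw [Set.mem_setOf_eq] at hω ⊢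
    omega

lemma marg_supp (hX : IsBirthDeathChain μ X r k)
    (hr : ∀ n, 1 ≤ n → r n ∈ Set.Ioo (0:ℝ) 1) :
    ∀ m x, k + m < x → μ {ω | X m ω = x} = 0 := by
  intro m
  induction m with
  | zero =>
    intro x hx
    rw [marg_start μ hX x, if_neg (by omega)]
  | succ m ih =>
    intro x hx
    have hx1 : 1 ≤ x := by omega
    rw [marg_recpos μ hX hr m x hx1]
    rw [ih (x+1) (by omega)]
    by_cases h2 : 2 ≤ x
    · rw [if_pos h2, ih (x-1) (by omega)]
      simp
    · rw [if_neg h2]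
      simp

end helpers

theorem det_main (r : ℕ → ℝ) (k : ℕ) (hk : 1 ≤ k)
    (hr : ∀ n, 1 ≤ n → r n ∈ Set.Ioo (0:ℝ) 1)
    (t : ℕ → ℝ) (ht : ∀ n, t n = ∏ i ∈ Finset.Icc 1 n, ((1 - r i) / r i))
    (hlim : Tendsto t atTop (nhds 0))
    (q : ℕ → ℕ → ℝ)
    (hq0 : ∀ x, q 0 x = if x = k then 1 else 0)
    (hnn : ∀ m x, 0 ≤ q m x)
    (hb : ∀ m x, q m x ≤ 1)
    (hsupp : ∀ m x, k + m < x → q m x = 0)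
    (hrec0 : ∀ m, q (m+1) 0 = q m 0 + (1 - r 1) * q m 1)
    (hrec : ∀ m y, 1 ≤ y →
      q (m+1) y = (if 2 ≤ y then r (y-1) * q m (y-1) else 0) + (1 - r (y+1)) * q m (y+1)) :
    Tendsto (fun m => ∑ x ∈ Finset.range (k+m+1), (x:ℝ) * q m x) atTop atTop := by
  -- basic facts about t
  have tpos : ∀ n, 0 < t n := by
    intro n
    rw [ht]
    refine Finset.prod_pos ?_
    intro i hi
    have hi1 : 1 ≤ i := (Finset.mem_Icc.1 hi).1
    have := hr i hi1
    exact div_pos (by linarith [this.2]) this.1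
  have t0 : t 0 = 1 := by rw [ht]; simp
  have tsucc : ∀ n, t (n+1) = t n * ((1 - r (n+1)) / r (n+1)) := by
    intro n
    rw [ht, ht, ← Finset.prod_Icc_succ_top (by omega : 1 ≤ n + 1)]
  -- the harmonic function h
  set h : ℕ → ℝ := fun n => ∑ i ∈ Finset.range n, t i with hh
  have h0 : h 0 = 0 := by simp [hh]
  have hsucc : ∀ n, h (n+1) = h n + t n := by intro n; simp [hh, Finset.sum_range_succ]
  have hnnh : ∀ n, 0 ≤ h n := by
    intro n
    exact Finset.sum_nonneg fun i _ => (tpos i).le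
  have harm : ∀ n, r (n+1) * h (n+2) + (1 - r (n+1)) * h n = h (n+1) := by
    intro n
    have hr1 := hr (n+1) (by omega)
    have key : r (n+1) * t (n+1) = (1 - r (n+1)) * t n := by
      rw [tsucc n]
      have hne : r (n+1) ≠ 0 := ne_of_gt hr1.1
      field_simp
    have e1 : h (n+2) = h (n+1) + t (n+1) := hsucc (n+1)
    have e2 : h (n+1) = h n + t n := hsucc n
    linear_combination r (n+1) * e1 - (1 - r (n+1)) * e2 + key
  -- sum stability
  have stab : ∀ (f : ℕ → ℝ) (m K₁ K₂ : ℕ), k+m+1 ≤ K₁ → K₁ ≤ K₂ →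
      ∑ x ∈ Finset.range K₂, f x * q m x = ∑ x ∈ Finset.range K₁, f x * q m x := by
    intro f m K₁ K₂ h1 h2
    refine (Finset.sum_subset (Finset.range_subset_range.2 h2) ?_).symm
    intro x hx hnx
    have hx' : k + m < x := by
      simp only [Finset.mem_range] at hx hnx; omega
    rw [hsupp m x hx', mul_zero]
  -- invariance of the h-weighted sum
  have Hinv : ∀ m, ∑ x ∈ Finset.range (k+m+1), h x * q m x = h k := by
    intro m
    induction m with
    | zero =>
      rw [Finset.sum_eq_single k]
      · rw [hq0]; simp
      · intro x _ hxk; rw [hq0]; simp [hxk]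
      · intro hnk; exact absurd (Finset.mem_range.2 (by omega)) hnk
    | succ m ih =>
      set N := k + m + 2 with hN
      have hA : ∑ x ∈ Finset.range (k+(m+1)+1), h x * q (m+1) x
          = ∑ x ∈ Finset.range (N+1), h x * q (m+1) x := by
        rw [stab (fun x => h x) (m+1) (k+(m+1)+1) (N+1) (by omega) (by omega)]
      rw [hA, Finset.sum_range_succ' (fun x => h x * q (m+1) x) N, h0, zero_mul, add_zero]
      have expand : ∀ i, h (i+1) * q (m+1) (i+1)
          = (if 1 ≤ i then h (i+1) * (r i * q m i) else 0)
            + h (i+1) * ((1 - r (i+2)) * q m (i+2)) := by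
        intro i
        rw [hrec m (i+1) (by omega)]
        have : (i+1) - 1 = i := by omega
        rw [this]
        by_cases h2 : 2 ≤ i + 1
        · rw [if_pos h2, if_pos (by omega : 1 ≤ i)]; ring
        · rw [if_neg h2, if_neg (by omega : ¬ 1 ≤ i)]; ring
      rw [Finset.sum_congr rfl (fun i _ => expand i), Finset.sum_add_distrib]
      set g : ℕ → ℝ := fun x => h (x-1) * ((1 - r x) * q m x) with hg
      have hB : ∑ i ∈ Finset.range N, h (i+1) * ((1 - r (i+2)) * q m (i+2))
          = ∑ i ∈ Finset.range N, g i := by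
        have e1 : ∀ i, h (i+1) * ((1 - r (i+2)) * q m (i+2)) = g (i+2) := by
          intro i; simp [hg]
        rw [Finset.sum_congr rfl (fun i _ => e1 i)]
        have e2 : ∑ i ∈ Finset.range (N+2), g i
            = ∑ i ∈ Finset.range N, g (i+2) + g 1 + g 0 := by
          rw [Finset.sum_range_succ' g (N+1), Finset.sum_range_succ' (fun i => g (i+1)) N]
        have g0 : g 0 = 0 := by simp [hg, h0]
        have g1 : g 1 = 0 := by simp [hg, h0]
        have e3 : ∑ i ∈ Finset.range (N+2), g i
            = ∑ i ∈ Finset.range N, g i + g N + g (N+1) := by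
          rw [Finset.sum_range_succ, Finset.sum_range_succ]
        have gN : g N = 0 := by
          simp only [hg]; rw [hsupp m N (by omega), mul_zero, mul_zero]
        have gN1 : g (N+1) = 0 := by
          simp only [hg]; rw [hsupp m (N+1) (by omega), mul_zero, mul_zero]
        have := e2.symm.trans e3
        rw [g0, g1, gN, gN1] at this
        linarith [this]
      rw [hB]
      rw [← Finset.sum_add_distrib]
      have term : ∀ i, (if 1 ≤ i then h (i+1) * (r i * q m i) else 0) + g i
          = h i * q m i := by
        intro i
        match i with
        | 0 => simp [hg, h0]
        | (n+1) =>
          rw [if_pos (by omega)]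
          simp only [hg]
          have : (n+1) - 1 = n := by omega
          rw [this]
          have hthis := harm n
          linear_combination q m (n+1) * hthis
      rw [Finset.sum_congr rfl (fun i _ => term i)]
      rw [show (∑ i ∈ Finset.range N, h i * q m i)
          = ∑ i ∈ Finset.range (k+m+1), h i * q m i from
        stab (fun x => h x) m (k+m+1) N (by omega) (by omega)]
      exact ih
  -- q m 0 converges
  have l1pos : 0 < 1 - r 1 := by linarith [(hr 1 le_rfl).2]
  have q0mono : Monotone (fun m => q m 0) := by
    refine monotone_nat_of_le_succ ?_
    intro m
    rw [hrec0 m]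
    have := hnn m 1
    nlinarith
  have q0bdd : BddAbove (Set.range fun m => q m 0) := by
    refine ⟨1, ?_⟩
    rintro x ⟨m, rfl⟩
    exact hb m 0
  have q0tend : Tendsto (fun m => q m 0) atTop (nhds (⨆ m, q m 0)) :=
    tendsto_atTop_ciSup q0mono q0bdd
  have q0diff : Tendsto (fun m => q (m+1) 0 - q m 0) atTop (nhds 0) := by
    have h1 : Tendsto (fun m => q (m+1) 0) atTop (nhds (⨆ m, q m 0)) :=
      q0tend.comp (tendsto_add_atTop_nat 1)
    have := h1.sub q0tend
    simpa using this
  have tend1 : Tendsto (fun m => q m 1) atTop (nhds 0) := by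
    have h1 : Tendsto (fun m => (q (m+1) 0 - q m 0) / (1 - r 1)) atTop (nhds 0) := by
      have := q0diff.div_const (1 - r 1)
      simpa using this
    refine h1.congr ?_
    intro m
    rw [hrec0 m]
    field_simp
    ring
  -- all positive states tend to 0
  have tendx : ∀ x, Tendsto (fun m => q m (x+1)) atTop (nhds 0) := by
    intro x
    induction x using Nat.strong_induction_on with
    | _ x IH =>
      match x with
      | 0 => exact tend1
      | (n+1) =>
        -- state n+2 ; use recursion at y = n+1
        have hx : Tendsto (fun m => q (m+1) (n+1)) atTop (nhds 0) :=
          (IH n (by omega)).comp (tendsto_add_atTop_nat 1)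
        have hbad : Tendsto (fun m => (if 2 ≤ n+1 then r n * q m n else 0)) atTop (nhds 0) := by
          by_cases h2 : 2 ≤ n + 1
          · simp only [if_pos h2]
            have hn1 : 1 ≤ n := by omega
            have h3 := (IH (n-1) (by omega))
            have hn : (n-1) + 1 = n := by omega
            rw [hn] at h3
            have := h3.const_mul (r n)
            simpa using this
          · simp only [if_neg h2]
            exact tendsto_const_nhds
        have lpos : 0 < 1 - r (n+2) := by linarith [(hr (n+2) (by omega)).2]
        have key : Tendsto (fun m =>
            (q (m+1) (n+1) - (if 2 ≤ n+1 then r n * q m n else 0)) / (1 - r (n+2)))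
            atTop (nhds 0) := by
          have := (hx.sub hbad).div_const (1 - r (n+2))
          simpa using this
        refine key.congr ?_
        intro m
        have := hrec m (n+1) (by omega)
        have hn : (n+1) - 1 = n := by omega
        rw [hn] at this
        rw [this]
        field_simp
        ring
  -- Cesàro: h n / n → 0
  have hce : Tendsto (fun n : ℕ => (n:ℝ)⁻¹ * h n) atTop (nhds 0) := hlim.cesaro
  -- positivity of h k
  have hkpos : 0 < h k := by
    have : h 1 ≤ h k := by
      have : Monotone h := by
        refine monotone_nat_of_le_succ ?_
        intro n; rw [hsucc]; linarith [tpos n]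
      exact this hk
    have h1 : h 1 = 1 := by simp [hh, Finset.sum_range_one, t0]
    linarith
  -- main conclusion
  rw [tendsto_atTop]
  intro C
  set Cm := max C 1 with hCm
  have hCmpos : 0 < Cm := lt_of_lt_of_le one_pos (le_max_right C 1)
  set ε := h k / (2 * Cm) with hε
  have εpos : 0 < ε := div_pos hkpos (by positivity)
  -- find M with h x ≤ ε x for x ≥ M
  obtain ⟨M₀, hM₀⟩ := (hce.eventually (gt_mem_nhds εpos)).exists_forall_of_atTop
  set M := max M₀ 1 with hM
  have hMbound : ∀ x, M ≤ x → h x ≤ ε * x := by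
    intro x hx
    have hx1 : 1 ≤ x := le_trans (le_max_right M₀ 1) hx
    have := hM₀ x (le_trans (le_max_left M₀ 1) hx)
    have hxpos : (0:ℝ) < x := by
      have : 0 < x := by omega
      exact_mod_cast this
    rw [inv_mul_lt_iff₀ hxpos] at this
    linarith
  -- the box sum tends to 0
  have Stend : Tendsto (fun m => ∑ x ∈ Finset.range (M+1), h x * q m x) atTop (nhds 0) := by
    have : Tendsto (fun m => ∑ x ∈ Finset.range (M+1), h x * q m x) atTop
        (nhds (∑ x ∈ Finset.range (M+1), (0:ℝ))) := by
      refine tendsto_finset_sum _ ?_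
      intro x _
      match x with
      | 0 => simp [h0]
      | (n+1) =>
        have := (tendx n).const_mul (h (n+1))
        simpa using this
    simpa using this
  have Sev : ∀ᶠ m in atTop, ∑ x ∈ Finset.range (M+1), h x * q m x < h k / 2 :=
    Stend.eventually (gt_mem_nhds (by linarith))
  obtain ⟨m₀, hm₀⟩ := Sev.exists_forall_of_atTop
  refine Filter.eventually_atTop.2 ⟨m₀, ?_⟩
  intro m hm
  set K := max (k+m+1) (M+1) with hK
  have hK1 : k+m+1 ≤ K := le_max_left _ _
  have hK2 : M+1 ≤ K := le_max_right _ _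
  have hHK : ∑ x ∈ Finset.range K, h x * q m x = h k := by
    rw [stab (fun x => h x) m (k+m+1) K le_rfl hK1]
    exact Hinv m
  have split : ∑ x ∈ Finset.range K, h x * q m x
      = ∑ x ∈ Finset.range (M+1), h x * q m x + ∑ x ∈ Finset.Ico (M+1) K, h x * q m x := by
    simp only [Finset.range_eq_Ico]
    exact (Finset.sum_Ico_consecutive _ (Nat.zero_le (M+1)) hK2).symm
  have bound2 : ∑ x ∈ Finset.Ico (M+1) K, h x * q m x
      ≤ ε * ∑ x ∈ Finset.range K, (x:ℝ) * q m x := by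
    have step1 : ∑ x ∈ Finset.Ico (M+1) K, h x * q m x
        ≤ ∑ x ∈ Finset.Ico (M+1) K, ε * ((x:ℝ) * q m x) := by
      refine Finset.sum_le_sum ?_
      intro x hx
      have hxM : M ≤ x := by
        have := (Finset.mem_Ico.1 hx).1; omega
      have := hMbound x hxM
      have := hnn m x
      nlinarith [hMbound x hxM, hnn m x]
    rw [← Finset.mul_sum] at step1
    refine le_trans step1 ?_
    refine mul_le_mul_of_nonneg_left ?_ εpos.le
    refine Finset.sum_le_sum_of_subset_of_nonneg ?_ ?_
    · intro x hx
      rw [Finset.mem_range]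
      exact (Finset.mem_Ico.1 hx).2
    · intro x _ _
      have := hnn m x
      positivity
  have EK : ∑ x ∈ Finset.range K, (x:ℝ) * q m x = ∑ x ∈ Finset.range (k+m+1), (x:ℝ) * q m x :=
    stab (fun x => (x:ℝ)) m (k+m+1) K le_rfl hK1
  have final : h k ≤ h k / 2 + ε * ∑ x ∈ Finset.range (k+m+1), (x:ℝ) * q m x := by
    rw [← EK]
    calc h k = ∑ x ∈ Finset.range K, h x * q m x := hHK.symm
    _ = ∑ x ∈ Finset.range (M+1), h x * q m x + ∑ x ∈ Finset.Ico (M+1) K, h x * q m x := split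
    _ ≤ h k / 2 + ε * ∑ x ∈ Finset.range K, (x:ℝ) * q m x := by
        have := hm₀ m hm
        have := bound2
        linarith
  have hεC : ε * Cm = h k / 2 := by
    rw [hε]; field_simp
  have : ε * Cm ≤ ε * ∑ x ∈ Finset.range (k+m+1), (x:ℝ) * q m x := by
    rw [hεC]; linarith
  have := le_of_mul_le_mul_left this εpos
  exact le_trans (le_max_left C 1) this



/-- If `tₙ = (l₁⋯lₙ)/(r₁⋯rₙ) → 0`, then `E[X_m] → ∞`. -/
theorem expected_value_tendsto_atTop {Ω : Type*} [MeasurableSpace Ω] (μ : Measure Ω)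
    (X : ℕ → Ω → ℕ) (r : ℕ → ℝ) (k : ℕ) (hk : 1 ≤ k)
    (hr : ∀ n, 1 ≤ n → r n ∈ Set.Ioo (0 : ℝ) 1)
    (hX : IsBirthDeathChain μ X r k)
    (t : ℕ → ℝ) (ht : ∀ n, t n = ∏ i ∈ Finset.Icc 1 n, ((1 - r i) / r i))
    (hlim : Tendsto t atTop (nhds 0)) :
    Tendsto (fun m => ∫ ω, (X m ω : ℝ) ∂μ) atTop atTop := by
  haveI := hX.isProb
  set q : ℕ → ℕ → ℝ := fun m x => (μ {ω | X m ω = x}).toReal with hqdef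
  have νle : ∀ m x, μ {ω | X m ω = x} ≤ 1 := fun m x => prob_le_one
  have νne : ∀ m x, μ {ω | X m ω = x} ≠ ⊤ := fun m x => measure_ne_top μ _
  have hq0 : ∀ x, q 0 x = if x = k then 1 else 0 := by
    intro x
    rw [hqdef]
    simp only
    rw [marg_start μ hX x]
    split <;> simp
  have hnn : ∀ m x, 0 ≤ q m x := fun m x => ENNReal.toReal_nonneg
  have hb : ∀ m x, q m x ≤ 1 := by
    intro m x
    have := ENNReal.toReal_mono ENNReal.one_ne_top (νle m x)
    simpa using this
  have hsupp : ∀ m x, k + m < x → q m x = 0 := by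
    intro m x hx
    rw [hqdef]
    simp only
    rw [marg_supp μ hX hr m x hx]
    simp
  have hrec0 : ∀ m, q (m+1) 0 = q m 0 + (1 - r 1) * q m 1 := by
    intro m
    rw [hqdef]
    simp only
    rw [marg_rec0 μ hX hr m, ENNReal.toReal_add (νne m 0)
      (ENNReal.mul_ne_top ENNReal.ofReal_ne_top (νne m 1)),
      ENNReal.toReal_mul, ENNReal.toReal_ofReal (by linarith [(hr 1 le_rfl).2])]
  have hrec : ∀ m y, 1 ≤ y →
      q (m+1) y = (if 2 ≤ y then r (y-1) * q m (y-1) else 0) + (1 - r (y+1)) * q m (y+1) := by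
    intro m y hy
    rw [hqdef]
    simp only
    rw [marg_recpos μ hX hr m y hy]
    by_cases h2 : 2 ≤ y
    · rw [if_pos h2, if_pos h2, ENNReal.toReal_add
        (ENNReal.mul_ne_top ENNReal.ofReal_ne_top (νne m (y-1)))
        (ENNReal.mul_ne_top ENNReal.ofReal_ne_top (νne m (y+1))),
        ENNReal.toReal_mul, ENNReal.toReal_mul,
        ENNReal.toReal_ofReal (hr (y-1) (by omega)).1.le,
        ENNReal.toReal_ofReal (by linarith [(hr (y+1) (by omega)).2])]
    · rw [if_neg h2, if_neg h2, zero_add, ENNReal.toReal_mul,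
        ENNReal.toReal_ofReal (by linarith [(hr (y+1) (by omega)).2]), zero_add]
  have hdet := det_main r k hk hr t ht hlim q hq0 hnn hb hsupp hrec0 hrec
  have hint : ∀ m, ∫ ω, (X m ω : ℝ) ∂μ = ∑ x ∈ Finset.range (k+m+1), (x:ℝ) * q m x := by
    intro m
    have hzero : ∀ j : ℕ, μ {ω | X m ω = k+m+1+j} = 0 :=
      fun j => marg_supp μ hX hr m _ (by omega)
    have hbd : ∀ᵐ ω ∂μ, X m ω < k + m + 1 := by
      rw [ae_iff]
      have hsub : {ω | ¬ X m ω < k+m+1} ⊆ ⋃ j : ℕ, {ω | X m ω = k+m+1+j} := by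
        intro ω hω
        rw [Set.mem_setOf_eq] at hω
        exact Set.mem_iUnion.2 ⟨X m ω - (k+m+1), by simp only [Set.mem_setOf_eq]; omega⟩
      exact le_antisymm (le_trans (measure_mono hsub)
        (measure_iUnion_null hzero).le) zero_le
    have haeq : ∀ᵐ ω ∂μ, (X m ω : ℝ)
        = ∑ x ∈ Finset.range (k+m+1), (x:ℝ) * ({ω' | X m ω' = x}.indicator 1 ω) := by
      filter_upwards [hbd] with ω hω
      rw [Finset.sum_eq_single (X m ω)]
      · rw [Set.indicator_of_mem (by exact rfl : ω ∈ {ω' | X m ω' = X m ω})]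
        simp
      · intro x hx hne
        have hnm : ω ∉ {ω' | X m ω' = x} := fun h => hne (Eq.symm h)
        rw [Set.indicator_of_notMem hnm, mul_zero]
      · intro h
        exact absurd (Finset.mem_range.2 hω) h
    rw [integral_congr_ae haeq, integral_finset_sum]
    · refine Finset.sum_congr rfl ?_
      intro x _
      rw [integral_const_mul, integral_indicator_one (meas_state μ hX m x)]
      rfl
    · intro x _
      exact ((integrable_const (1:ℝ)).indicator (meas_state μ hX m x)).const_mul _
  exact hdet.congr (fun m => (hint m).symm)
end

section
/- Let (X_m) be the birth-death chain on ℕ started at k ≥ 1 with l_n = n/(2n+1), r_n = (n+1)/(2n+1) for n ≥ 1 and 0 absorbing. Then the chain reaches 0 with probability 1, yet E[X_m] → ∞ as m → ∞. -/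
open MeasureTheory ProbabilityTheory Filter Set

open scoped ENNReal
set_option linter.unusedSectionVars false

noncomputable def Hh (n : ℕ) : ℝ := ((harmonic n : ℚ) : ℝ)

lemma Hh_zero : Hh 0 = 0 := by simp [Hh]

lemma Hh_succ (n : ℕ) : Hh (n+1) = Hh n + 1/(n+1) := by
  simp only [Hh, harmonic_succ]
  push_cast
  ring

lemma Hh_nonneg (n : ℕ) : 0 ≤ Hh n := by
  induction n with
  | zero => simp [Hh_zero]
  | succ n ih => rw [Hh_succ]; positivity

lemma Hh_mono : Monotone Hh := by
  apply monotone_nat_of_le_succ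
  intro n
  rw [Hh_succ]
  have : (0:ℝ) ≤ 1/(n+1) := by positivity
  linarith

lemma Hh_one : Hh 1 = 1 := by
  rw [show (1:ℕ) = 0 + 1 from rfl, Hh_succ, Hh_zero]; norm_num

lemma Hh_one_le {n : ℕ} (hn : 1 ≤ n) : 1 ≤ Hh n := by
  have := Hh_mono hn
  rwa [Hh_one] at this

lemma Hh_pos {n : ℕ} (hn : 1 ≤ n) : 0 < Hh n :=
  lt_of_lt_of_le one_pos (Hh_one_le hn)

lemma Hh_le_two_sqrt {n : ℕ} (hn : 1 ≤ n) : Hh n ≤ 2 * Real.sqrt n := by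
  have h1 : Hh n ≤ 1 + Real.log n := by
    have := harmonic_le_one_add_log n
    simpa [Hh] using this
  have hs : (0:ℝ) < Real.sqrt n := Real.sqrt_pos.2 (by exact_mod_cast hn)
  have hlog : Real.log n = 2 * Real.log (Real.sqrt n) := by
    rw [Real.log_sqrt (by positivity)]; ring
  have h2 : Real.log (Real.sqrt n) ≤ Real.sqrt n - 1 :=
    Real.log_le_sub_one_of_pos hs
  nlinarith

lemma Hh_unbounded (C : ℝ) : ∃ N : ℕ, C ≤ Hh N := by
  refine ⟨⌈Real.exp C⌉₊, ?_⟩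
  have h1 : Real.log (⌈Real.exp C⌉₊ + 1) ≤ Hh ⌈Real.exp C⌉₊ := by
    have := log_add_one_le_harmonic ⌈Real.exp C⌉₊
    simpa [Hh] using this
  have h2 : Real.exp C ≤ (⌈Real.exp C⌉₊ : ℝ) + 1 :=
    le_trans (Nat.le_ceil _) (by linarith)
  calc C = Real.log (Real.exp C) := (Real.log_exp C).symm
    _ ≤ Real.log (⌈Real.exp C⌉₊ + 1) := Real.log_le_log (Real.exp_pos C) h2
    _ ≤ _ := h1

lemma Hh_ratio {N n : ℕ} (hN : 1 ≤ N) (h : N ≤ n) : (N:ℝ) * Hh n ≤ n * Hh N := by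
  induction n, h using Nat.le_induction with
  | base => exact le_refl _
  | succ n hn ih =>
      rw [Hh_succ]
      have h1 : (N:ℝ) * (1/(n+1)) ≤ 1 := by
        rw [mul_one_div]
        apply div_le_one_of_le₀
        · exact_mod_cast Nat.le_succ_of_le hn
        · positivity
      have h2 : (1:ℝ) ≤ Hh N := Hh_one_le hN
      have : (N:ℝ) * Hh n + N * (1/(n+1)) ≤ n * Hh N + Hh N := by linarith
      calc (N:ℝ) * (Hh n + 1/(n+1)) = N * Hh n + N * (1/(n+1)) := by ring
        _ ≤ n * Hh N + Hh N := this
        _ = (↑(n+1)) * Hh N := by push_cast; ring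

lemma Hh_harmonicity {n : ℕ} (hn : 1 ≤ n) :
    ((n:ℝ) + 1) / (2*n + 1) * Hh (n+1) + (1 - ((n:ℝ)+1)/(2*n+1)) * Hh (n-1) = Hh n := by
  obtain ⟨m, rfl⟩ := Nat.exists_eq_add_of_le hn
  have h1 : (1 + m : ℕ) - 1 = m := by omega
  rw [h1]
  have e1 : Hh (1 + m + 1) = Hh (1+m) + 1/(1+m+1) := by
    rw [show 1+m+1 = (1+m)+1 from rfl, Hh_succ]; push_cast; ring_nf
  have e2 : Hh (1 + m) = Hh m + 1/(m+1) := by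
    rw [show 1+m = m+1 from by omega, Hh_succ]
  rw [e1, e2]
  have hm1 : ((m:ℝ)+1) ≠ 0 := by positivity
  have hm2 : ((m:ℝ)+2) ≠ 0 := by positivity
  have hm3 : (2*((1:ℝ)+m)+1) ≠ 0 := by positivity
  push_cast
  field_simp
  ring

section Chain
variable {Ω : Type*} [MeasurableSpace Ω]

def cylBD (X : ℕ → Ω → ℕ) (m : ℕ) (v : Fin (m+1) → ℕ) : Set Ω :=
  ⋂ i : Fin (m+1), {ω | X (i : ℕ) ω = v i}

def pextBD (m : ℕ) (v : Fin (m+1) → ℕ) : ℕ → ℕ :=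
  fun i => if h : i < m+1 then v ⟨i,h⟩ else 0

noncomputable def KBD (r : ℕ → ℝ) (n j : ℕ) : ℝ≥0∞ :=
  if n = 0 then (if j = 0 then 1 else 0)
  else if j = n+1 then ENNReal.ofReal (r n)
  else if j = n-1 then ENNReal.ofReal (1 - r n) else 0

variable {μ : Measure Ω} {X : ℕ → Ω → ℕ} {r : ℕ → ℝ} {k : ℕ}

lemma cylBD_eq (X : ℕ → Ω → ℕ) (m : ℕ) (v : Fin (m+1) → ℕ) :
    cylBD X m v = ⋂ i ∈ Finset.range (m+1), {ω | X i ω = pextBD m v i} := by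
  ext ω
  simp only [cylBD, pextBD, Set.mem_iInter, Set.mem_setOf_eq, Finset.mem_range]
  constructor
  · intro h i hi; rw [dif_pos hi]; exact h ⟨i, hi⟩
  · intro h i; have := h i i.isLt; rwa [dif_pos i.isLt] at this

lemma measurable_setBD (hX : IsBirthDeathChain μ X r k) (m n : ℕ) :
    MeasurableSet {ω | X m ω = n} :=
  (hX.meas m) (measurableSet_singleton n)

lemma cylBD_measurable (hX : IsBirthDeathChain μ X r k) (m : ℕ) (v : Fin (m+1) → ℕ) :
    MeasurableSet (cylBD X m v) :=
  MeasurableSet.iInter fun i => measurable_setBD hX i (v i)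

lemma cylBD_subset (X : ℕ → Ω → ℕ) (m : ℕ) (v : Fin (m+1) → ℕ) (i : Fin (m+1)) :
    cylBD X m v ⊆ {ω | X (i:ℕ) ω = v i} :=
  Set.iInter_subset _ i

lemma cylBD_disjoint (X : ℕ → Ω → ℕ) (m : ℕ) :
    Pairwise (Function.onFun Disjoint (fun v : Fin (m+1) → ℕ => cylBD X m v)) := by
  intro v w hvw
  rw [Function.onFun, Set.disjoint_left]
  intro ω hv hw
  apply hvw
  funext i
  have h1 := Set.mem_iInter.1 hv i
  have h2 := Set.mem_iInter.1 hw i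
  simp only [Set.mem_setOf_eq] at h1 h2
  rw [← h1, ← h2]

lemma cylBD_cover (X : ℕ → Ω → ℕ) (m : ℕ) :
    ⋃ v : Fin (m+1) → ℕ, cylBD X m v = Set.univ := by
  ext ω
  simp only [Set.mem_iUnion, Set.mem_univ, iff_true]
  exact ⟨fun i => X (i:ℕ) ω, Set.mem_iInter.2 fun i => rfl⟩

lemma partition_cyl (hX : IsBirthDeathChain μ X r k) (m : ℕ) {S : Set Ω}
    (hS : MeasurableSet S) :
    μ S = ∑' v : Fin (m+1) → ℕ, μ (S ∩ cylBD X m v) := by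
  have h1 : S = ⋃ v : Fin (m+1) → ℕ, S ∩ cylBD X m v := by
    rw [← Set.inter_iUnion, cylBD_cover, Set.inter_univ]
  nth_rewrite 1 [h1]
  exact measure_iUnion
    (fun v w hvw => ((cylBD_disjoint X m hvw).inter_left' S).inter_right' S)
    (fun v => hS.inter (cylBD_measurable hX m v))

lemma partition_val (hX : IsBirthDeathChain μ X r k) (m : ℕ) {S : Set Ω}
    (hS : MeasurableSet S) :
    μ S = ∑' n : ℕ, μ ({ω | X m ω = n} ∩ S) := by
  have h1 : S = ⋃ n : ℕ, {ω | X m ω = n} ∩ S := by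
    ext ω; simp
  nth_rewrite 1 [h1]
  exact measure_iUnion
    (fun a b hab => by
      rw [Function.onFun, Set.disjoint_left]
      rintro ω ⟨h1, -⟩ ⟨h2, -⟩
      rw [Set.mem_setOf_eq] at h1 h2
      exact hab (h1.symm.trans h2))
    (fun n => (measurable_setBD hX m n).inter hS)

lemma null_of_full {s A C : Set Ω} (hCm : MeasurableSet C)
    (hst : μ s ≠ ⊤) (hAs : A ⊆ s) (hCs : C ⊆ s) (hd : Disjoint A C)
    (hfull : μ A = μ s) : μ C = 0 := by
  have h1 : μ A + μ C = μ (A ∪ C) := (measure_union hd hCm).symm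
  have h2 : μ (A ∪ C) ≤ μ s := measure_mono (Set.union_subset hAs hCs)
  have h3 : μ A + μ C ≤ μ A + 0 := by
    rw [add_zero, h1, hfull]; exact h2
  have hAne : μ A ≠ ⊤ := by rw [hfull]; exact hst
  exact le_antisymm (by rwa [ENNReal.add_le_add_iff_left hAne] at h3) zero_le

lemma disj_val {m a b : ℕ} (hab : a ≠ b) (s : Set Ω) :
    Disjoint (s ∩ {ω | X m ω = a}) (s ∩ {ω | X m ω = b}) := by
  rw [Set.disjoint_left]
  rintro ω ⟨-, h1⟩ ⟨-, h2⟩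
  rw [Set.mem_setOf_eq] at h1 h2
  exact hab (h1.symm.trans h2)

lemma pextBD_last (m : ℕ) (v : Fin (m+1) → ℕ) : pextBD m v m = v (Fin.last m) := by
  simp only [pextBD, Fin.last]
  rw [dif_pos (Nat.lt_succ_self m)]

lemma cyl_step (hX : IsBirthDeathChain μ X r k)
    (hr : ∀ n, 1 ≤ n → r n = (n + 1) / (2 * n + 1)) (m : ℕ) (v : Fin (m+1) → ℕ) (j : ℕ) :
    μ (cylBD X m v ∩ {ω | X (m+1) ω = j})
      = KBD r (v (Fin.last m)) j * μ (cylBD X m v) := by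
  haveI := hX.isProb
  set s := cylBD X m v with hs_def
  have hsm : MeasurableSet s := cylBD_measurable hX m v
  by_cases hs0 : μ s = 0
  · rw [hs0, mul_zero]
    exact le_antisymm (le_trans (measure_mono Set.inter_subset_left) hs0.le) zero_le
  have hseq : s = ⋂ i ∈ Finset.range (m+1), {ω | X i ω = pextBD m v i} := cylBD_eq X m v
  set n := v (Fin.last m) with hn_def
  have hlast : pextBD m v m = n := pextBD_last m v
  have hsne : μ s ≠ ⊤ := measure_ne_top μ s
  rcases Nat.eq_zero_or_pos n with hn0 | hnpos
  · -- absorbing case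
    have habs := hX.absorb m (pextBD m v) (by rw [hlast]; exact hn0)
      (by rw [← hseq]; exact hs0)
    rw [← hseq] at habs
    have h0 : μ (s ∩ {ω | X (m+1) ω = 0}) = μ s := by
      have h := cond_mul_eq_inter hsm ({ω | X (m+1) ω = 0}) μ
      rw [habs, one_mul] at h
      exact h.symm
    by_cases hj : j = 0
    · subst hj
      rw [hn0]
      simpa [KBD] using h0
    · rw [hn0]
      simpa [KBD, hj] using null_of_full (hsm.inter (measurable_setBD hX (m+1) j)) hsne
        Set.inter_subset_left Set.inter_subset_left
        (disj_val (Ne.symm hj) s) h0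
  · -- interior case
    have hnn : n ≠ 0 := Nat.pos_iff_ne_zero.1 hnpos
    have hup := hX.step_up m (pextBD m v) (by rw [hlast]; exact hnpos)
      (by rw [← hseq]; exact hs0)
    have hdn := hX.step_down m (pextBD m v) (by rw [hlast]; exact hnpos)
      (by rw [← hseq]; exact hs0)
    rw [← hseq, hlast] at hup hdn
    have hA : μ (s ∩ {ω | X (m+1) ω = n+1}) = ENNReal.ofReal (r n) * μ s := by
      have h := cond_mul_eq_inter hsm ({ω | X (m+1) ω = n+1}) μ
      rw [hup] at h
      exact h.symm
    have hB : μ (s ∩ {ω | X (m+1) ω = n-1}) = ENNReal.ofReal (1 - r n) * μ s := by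
      have h := cond_mul_eq_inter hsm ({ω | X (m+1) ω = n-1}) μ
      rw [hdn] at h
      exact h.symm
    have hrn := hr n hnpos
    have h2n : (0:ℝ) < 2*(n:ℝ)+1 := by positivity
    have hr0 : 0 ≤ r n := by rw [hrn]; positivity
    have hr1' : r n ≤ 1 := by
      rw [hrn, div_le_one h2n]
      have : (0:ℝ) ≤ (n:ℝ) := Nat.cast_nonneg n
      linarith
    have hsum : μ (s ∩ {ω | X (m+1) ω = n+1}) + μ (s ∩ {ω | X (m+1) ω = n-1}) = μ s := by
      rw [hA, hB, ← add_mul, ← ENNReal.ofReal_add hr0 (by linarith),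
        show r n + (1 - r n) = 1 by ring, ENNReal.ofReal_one, one_mul]
    by_cases hj1 : j = n+1
    · subst hj1
      simpa [KBD, hnn] using hA
    · by_cases hj2 : j = n-1
      · subst hj2
        simpa [KBD, hnn, (show n - 1 ≠ n + 1 by omega)] using hB
      · have hfull : μ ((s ∩ {ω | X (m+1) ω = n+1}) ∪ (s ∩ {ω | X (m+1) ω = n-1})) = μ s := by
          rw [measure_union (disj_val (by omega) s) (hsm.inter (measurable_setBD hX (m+1) (n-1)))]
          exact hsum
        simpa [KBD, hnn, hj1, hj2] using null_of_full (hsm.inter (measurable_setBD hX (m+1) j)) hsne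
          (Set.union_subset Set.inter_subset_left Set.inter_subset_left)
          Set.inter_subset_left
          (Disjoint.union_left (disj_val (by omega) s) (disj_val (by omega) s))
          hfull

noncomputable def ppBD {Ω : Type*} [MeasurableSpace Ω] (μ : Measure Ω)
    (X : ℕ → Ω → ℕ) (m n : ℕ) : ℝ≥0∞ := μ {ω | X m ω = n}

variable {Ω : Type*} [MeasurableSpace Ω] {μ : Measure Ω} {X : ℕ → Ω → ℕ} {r : ℕ → ℝ} {k : ℕ}

lemma T_step (hX : IsBirthDeathChain μ X r k)
    (hr : ∀ n, 1 ≤ n → r n = (n + 1) / (2 * n + 1)) (m n j : ℕ) :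
    μ ({ω | X m ω = n} ∩ {ω | X (m+1) ω = j}) = KBD r n j * ppBD μ X m n := by
  rw [partition_cyl hX m ((measurable_setBD hX m n).inter (measurable_setBD hX (m+1) j)),
    ppBD, partition_cyl hX m (measurable_setBD hX m n), ← ENNReal.tsum_mul_left]
  apply tsum_congr
  intro v
  by_cases hv : v (Fin.last m) = n
  · have hsub : cylBD X m v ⊆ {ω | X m ω = n} := by
      intro ω hω
      have h1 := cylBD_subset X m v (Fin.last m) hω
      rw [Set.mem_setOf_eq, Fin.val_last] at h1
      rw [Set.mem_setOf_eq, h1, hv]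
    have e1 : {ω | X m ω = n} ∩ {ω | X (m+1) ω = j} ∩ cylBD X m v
        = cylBD X m v ∩ {ω | X (m+1) ω = j} := by
      ext ω
      constructor
      · rintro ⟨⟨-, h2⟩, h3⟩; exact ⟨h3, h2⟩
      · rintro ⟨h1, h2⟩; exact ⟨⟨hsub h1, h2⟩, h1⟩
    have e2 : {ω | X m ω = n} ∩ cylBD X m v = cylBD X m v :=
      Set.inter_eq_self_of_subset_right hsub
    rw [e1, e2, cyl_step hX hr m v j, hv]
  · have e0 : {ω | X m ω = n} ∩ cylBD X m v = ∅ := by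
      ext ω
      simp only [Set.mem_inter_iff, Set.mem_empty_iff_false, iff_false, not_and,
        Set.mem_setOf_eq]
      intro h1 h2
      have h3 := cylBD_subset X m v (Fin.last m) h2
      rw [Set.mem_setOf_eq, Fin.val_last] at h3
      exact hv (h3 ▸ h1)
    have e1 : {ω | X m ω = n} ∩ {ω | X (m+1) ω = j} ∩ cylBD X m v = ∅ := by
      rw [Set.eq_empty_iff_forall_notMem]
      rintro ω ⟨⟨h1, -⟩, h3⟩
      rw [Set.eq_empty_iff_forall_notMem] at e0
      exact e0 ω ⟨h1, h3⟩
    rw [e1, e0]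
    simp

lemma rec_all (hX : IsBirthDeathChain μ X r k)
    (hr : ∀ n, 1 ≤ n → r n = (n + 1) / (2 * n + 1)) (m j : ℕ) :
    ppBD μ X (m+1) j = ∑' n : ℕ, KBD r n j * ppBD μ X m n := by
  rw [ppBD, partition_val hX m (measurable_setBD hX (m+1) j)]
  exact tsum_congr fun n => T_step hX hr m n j

lemma totBD (hX : IsBirthDeathChain μ X r k) (m : ℕ) :
    ∑' n : ℕ, ppBD μ X m n = 1 := by
  haveI := hX.isProb
  have h := partition_val hX m (MeasurableSet.univ (α := Ω))
  rw [measure_univ] at h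
  rw [h]
  apply tsum_congr
  intro n
  rw [ppBD, Set.inter_univ]

lemma rec0BD (hX : IsBirthDeathChain μ X r k)
    (hr : ∀ n, 1 ≤ n → r n = (n + 1) / (2 * n + 1)) (m : ℕ) :
    ppBD μ X (m+1) 0 = ppBD μ X m 0 + ENNReal.ofReal (1 - r 1) * ppBD μ X m 1 := by
  rw [rec_all hX hr m 0,
    tsum_eq_sum (s := {0, 1}) (by
      intro b hb
      simp only [Finset.mem_insert, Finset.mem_singleton] at hb
      push_neg at hb
      have hb0 : b ≠ 0 := hb.1
      have hb1 : (0:ℕ) ≠ b + 1 := by omega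
      have hb2 : (0:ℕ) ≠ b - 1 := by omega
      simp [KBD, hb0, hb1, hb2]),
    Finset.sum_pair (by norm_num : (0:ℕ) ≠ 1)]
  have e1 : KBD r 0 0 = 1 := by simp [KBD]
  have e2 : KBD r 1 0 = ENNReal.ofReal (1 - r 1) := by simp [KBD]
  rw [e1, e2, one_mul]

lemma rec1BD (hX : IsBirthDeathChain μ X r k)
    (hr : ∀ n, 1 ≤ n → r n = (n + 1) / (2 * n + 1)) (m : ℕ) :
    ppBD μ X (m+1) 1 = ENNReal.ofReal (1 - r 2) * ppBD μ X m 2 := by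
  rw [rec_all hX hr m 1,
    tsum_eq_single 2 (by
      intro b hb
      rcases Nat.eq_zero_or_pos b with hb0 | hbp
      · subst hb0; simp [KBD]
      · have h1 : (1:ℕ) ≠ b + 1 := by omega
        have h2 : (1:ℕ) ≠ b - 1 := by omega
        have h3 : b ≠ 0 := by omega
        simp [KBD, h3, h1, h2])]
  have e1 : KBD r 2 1 = ENNReal.ofReal (1 - r 2) := by simp [KBD]
  rw [e1]

lemma rec2BD (hX : IsBirthDeathChain μ X r k)
    (hr : ∀ n, 1 ≤ n → r n = (n + 1) / (2 * n + 1)) (m i : ℕ) :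
    ppBD μ X (m+1) (i+2) = ENNReal.ofReal (r (i+1)) * ppBD μ X m (i+1)
      + ENNReal.ofReal (1 - r (i+3)) * ppBD μ X m (i+3) := by
  rw [rec_all hX hr m (i+2),
    tsum_eq_sum (s := {i+1, i+3}) (by
      intro b hb
      simp only [Finset.mem_insert, Finset.mem_singleton] at hb
      push_neg at hb
      rcases Nat.eq_zero_or_pos b with hb0 | hbp
      · subst hb0; simp [KBD]
      · have h1 : i + 2 ≠ b + 1 := by omega
        have h2 : i + 2 ≠ b - 1 := by omega
        simp [KBD, (by omega : b ≠ 0), h1, h2]),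
    Finset.sum_pair (by omega : i + 1 ≠ i + 3)]
  have e1 : KBD r (i+1) (i+2) = ENNReal.ofReal (r (i+1)) := by simp [KBD]
  have e2 : KBD r (i+3) (i+2) = ENNReal.ofReal (1 - r (i+3)) := by
    simp only [KBD]
    rw [if_neg (by omega : ¬ i + 3 = 0), if_neg (by omega : ¬ i + 2 = i + 3 + 1),
      if_pos (by omega : i + 2 = i + 3 - 1)]
  rw [e1, e2]

lemma startBD (hX : IsBirthDeathChain μ X r k) (n : ℕ) :
    ppBD μ X 0 n = if n = k then 1 else 0 := by
  haveI := hX.isProb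
  have h0 : μ {ω | ¬ (X 0 ω = k)} = 0 := by
    have := hX.start
    rwa [MeasureTheory.ae_iff] at this
  split_ifs with h
  · subst h
    rw [ppBD]
    have : {ω | X 0 ω = n} =ᵐ[μ] (Set.univ : Set Ω) := by
      rw [Filter.eventuallyEq_univ]
      exact hX.start.mono fun ω hω => hω
    rw [measure_congr this, measure_univ]
  · rw [ppBD]
    apply measure_mono_null _ h0
    intro ω hω
    rw [Set.mem_setOf_eq] at hω
    exact fun hc => h (hω.symm.trans hc)

lemma suppBD (hX : IsBirthDeathChain μ X r k)
    (hr : ∀ n, 1 ≤ n → r n = (n + 1) / (2 * n + 1)) (hk : 1 ≤ k) :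
    ∀ m n, k + m < n → ppBD μ X m n = 0 := by
  intro m
  induction m with
  | zero =>
      intro n hn
      rw [startBD hX n, if_neg (by omega)]
  | succ m ih =>
      intro n hn
      obtain ⟨i, rfl⟩ : ∃ i, n = i + 2 := ⟨n - 2, by omega⟩
      rw [rec2BD hX hr m i, ih (i+1) (by omega), ih (i+3) (by omega), mul_zero, mul_zero,
        add_zero]

noncomputable def PrBD {Ω : Type*} [MeasurableSpace Ω] (μ : Measure Ω)
    (X : ℕ → Ω → ℕ) (m n : ℕ) : ℝ := (ppBD μ X m n).toReal

lemma ppBD_ne_top (hX : IsBirthDeathChain μ X r k) (m n : ℕ) : ppBD μ X m n ≠ ⊤ := by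
  haveI := hX.isProb
  exact measure_ne_top μ _

lemma PrBD_nonneg (m n : ℕ) : 0 ≤ PrBD μ X m n := ENNReal.toReal_nonneg

lemma PrBD_le_one (hX : IsBirthDeathChain μ X r k) (m n : ℕ) : PrBD μ X m n ≤ 1 := by
  haveI := hX.isProb
  rw [PrBD]
  have h := prob_le_one (μ := μ) (s := {ω | X m ω = n})
  calc (ppBD μ X m n).toReal ≤ (1 : ℝ≥0∞).toReal :=
        ENNReal.toReal_mono (by simp) h
    _ = 1 := by simp

lemma r_bounds (hr : ∀ n, 1 ≤ n → r n = (n + 1) / (2 * n + 1)) {n : ℕ} (hn : 1 ≤ n) :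
    0 ≤ r n ∧ r n ≤ 1 := by
  rw [hr n hn]
  have h2 : (0:ℝ) < 2 * (n:ℝ) + 1 := by positivity
  constructor
  · positivity
  · rw [div_le_one h2]
    have : (0:ℝ) ≤ (n:ℝ) := Nat.cast_nonneg n
    linarith

lemma rec0R (hX : IsBirthDeathChain μ X r k)
    (hr : ∀ n, 1 ≤ n → r n = (n + 1) / (2 * n + 1)) (m : ℕ) :
    PrBD μ X (m+1) 0 = PrBD μ X m 0 + (1 - r 1) * PrBD μ X m 1 := by
  have hb := r_bounds hr (le_refl 1)
  rw [PrBD, rec0BD hX hr m, ENNReal.toReal_add (ppBD_ne_top hX m 0)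
      (ENNReal.mul_ne_top ENNReal.ofReal_ne_top (ppBD_ne_top hX m 1)),
    ENNReal.toReal_mul, ENNReal.toReal_ofReal (by linarith [hb.2])]
  rfl

lemma rec1R (hX : IsBirthDeathChain μ X r k)
    (hr : ∀ n, 1 ≤ n → r n = (n + 1) / (2 * n + 1)) (m : ℕ) :
    PrBD μ X (m+1) 1 = (1 - r 2) * PrBD μ X m 2 := by
  have hb := r_bounds hr (by norm_num : 1 ≤ 2)
  rw [PrBD, rec1BD hX hr m, ENNReal.toReal_mul, ENNReal.toReal_ofReal (by linarith [hb.2])]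
  rfl

lemma rec2R (hX : IsBirthDeathChain μ X r k)
    (hr : ∀ n, 1 ≤ n → r n = (n + 1) / (2 * n + 1)) (m i : ℕ) :
    PrBD μ X (m+1) (i+2) = r (i+1) * PrBD μ X m (i+1) + (1 - r (i+3)) * PrBD μ X m (i+3) := by
  have hb1 := r_bounds hr (by omega : 1 ≤ i+1)
  have hb3 := r_bounds hr (by omega : 1 ≤ i+3)
  rw [PrBD, rec2BD hX hr m i, ENNReal.toReal_add
      (ENNReal.mul_ne_top ENNReal.ofReal_ne_top (ppBD_ne_top hX m (i+1)))
      (ENNReal.mul_ne_top ENNReal.ofReal_ne_top (ppBD_ne_top hX m (i+3))),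
    ENNReal.toReal_mul, ENNReal.toReal_mul, ENNReal.toReal_ofReal hb1.1,
    ENNReal.toReal_ofReal (by linarith [hb3.2])]
  rfl

/-- uniform recursion: `Pr (m+1) (i+1) = [i ≥ 1] r i Pr m i + (1 - r (i+2)) Pr m (i+2)` -/
lemma recU (hX : IsBirthDeathChain μ X r k)
    (hr : ∀ n, 1 ≤ n → r n = (n + 1) / (2 * n + 1)) (m i : ℕ) :
    PrBD μ X (m+1) (i+1)
      = (if i = 0 then 0 else r i * PrBD μ X m i) + (1 - r (i+2)) * PrBD μ X m (i+2) := by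
  rcases Nat.eq_zero_or_pos i with rfl | hi
  · rw [if_pos rfl, zero_add]
    simpa using rec1R hX hr m
  · obtain ⟨i', rfl⟩ : ∃ i', i = i' + 1 := ⟨i - 1, by omega⟩
    rw [if_neg (by omega)]
    exact rec2R hX hr m i'

lemma suppR (hX : IsBirthDeathChain μ X r k)
    (hr : ∀ n, 1 ≤ n → r n = (n + 1) / (2 * n + 1)) (hk : 1 ≤ k)
    {m n : ℕ} (hn : k + m < n) : PrBD μ X m n = 0 := by
  rw [PrBD, suppBD hX hr hk m n hn, ENNReal.toReal_zero]

lemma totR (hX : IsBirthDeathChain μ X r k)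
    (hr : ∀ n, 1 ≤ n → r n = (n + 1) / (2 * n + 1)) (hk : 1 ≤ k) (m : ℕ) :
    ∑ n ∈ Finset.range (k+m+1), PrBD μ X m n = 1 := by
  have h1 : ∑' n : ℕ, ppBD μ X m n = ∑ n ∈ Finset.range (k+m+1), ppBD μ X m n :=
    tsum_eq_sum (fun b hb => suppBD hX hr hk m b (by
      rw [Finset.mem_range] at hb; omega))
  have h2 := totBD hX m
  rw [h1] at h2
  have h3 : ((1:ℝ≥0∞)).toReal = 1 := by simp
  rw [← h2, ENNReal.toReal_sum (fun a _ => ppBD_ne_top hX m a)] at h3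
  rw [← h3]
  rfl

lemma harmR (hr : ∀ n, 1 ≤ n → r n = (n + 1) / (2 * n + 1)) {n : ℕ} (hn : 1 ≤ n) :
    r n * Hh (n+1) + (1 - r n) * Hh (n-1) = Hh n := by
  rw [hr n hn]; exact Hh_harmonicity hn

lemma conserve (hX : IsBirthDeathChain μ X r k)
    (hr : ∀ n, 1 ≤ n → r n = (n + 1) / (2 * n + 1)) (hk : 1 ≤ k) (m : ℕ) :
    ∑ n ∈ Finset.range (k+m+1), Hh n * PrBD μ X m n = Hh k := by
  induction m with
  | zero =>
      have hP : ∀ n, PrBD μ X 0 n = if n = k then 1 else 0 := by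
        intro n
        rw [PrBD, startBD hX n]
        split_ifs <;> simp
      rw [Finset.sum_eq_single_of_mem k (Finset.mem_range.2 (by omega))]
      · rw [hP k, if_pos rfl, mul_one]
      · intro b _ hb
        rw [hP b, if_neg hb, mul_zero]
  | succ m ih =>
      have hB : k + (m+1) + 1 = (k+m+1) + 1 := by omega
      rw [hB]
      have hterm : ∀ i, Hh (i+1) * PrBD μ X (m+1) (i+1)
          = (if i = 0 then 0 else Hh (i+1) * (r i * PrBD μ X m i))
            + Hh ((i+2)-1) * ((1 - r (i+2)) * PrBD μ X m (i+2)) := by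
        intro i
        rw [recU hX hr m i]
        split_ifs with h
        · rw [show i+2-1 = i+1 by omega]
          ring
        · rw [show i+2-1 = i+1 by omega]
          ring
      have h0 : Hh 0 * PrBD μ X (m+1) 0 = 0 := by rw [Hh_zero, zero_mul]
      rw [Finset.sum_range_succ' (fun n => Hh n * PrBD μ X (m+1) n) (k+m+1), h0, add_zero]
      rw [Finset.sum_congr rfl (fun i _ => hterm i), Finset.sum_add_distrib]
      -- handle the shifted (down-move) sum
      have hshift : ∑ i ∈ Finset.range (k+m+1),
            Hh ((i+2)-1) * ((1 - r (i+2)) * PrBD μ X m (i+2))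
          = ∑ n ∈ Finset.range (k+m+1), Hh (n-1) * ((1 - r n) * PrBD μ X m n) := by
        have e1 := Finset.sum_range_succ'
          (fun n => Hh (n-1) * ((1 - r n) * PrBD μ X m n)) (k+m+2)
        have e2 := Finset.sum_range_succ'
          (fun i => Hh ((i+1)-1) * ((1 - r (i+1)) * PrBD μ X m (i+1))) (k+m+1)
        have z0 : Hh ((0:ℕ)-1) * ((1 - r 0) * PrBD μ X m 0) = 0 := by
          norm_num [Hh_zero]
        have z1 : Hh ((0+1:ℕ)-1) * ((1 - r (0+1)) * PrBD μ X m (0+1)) = 0 := by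
          norm_num [Hh_zero]
        have zB1 : Hh ((k+m+2)-1) * ((1 - r (k+m+2)) * PrBD μ X m (k+m+2)) = 0 := by
          rw [suppR hX hr hk (by omega)]; ring
        have zB2 : Hh ((k+m+1)-1) * ((1 - r (k+m+1)) * PrBD μ X m (k+m+1)) = 0 := by
          rw [suppR hX hr hk (by omega)]; ring
        have e3 : ∑ n ∈ Finset.range (k+m+3),
              Hh (n-1) * ((1 - r n) * PrBD μ X m n)
            = ∑ n ∈ Finset.range (k+m+1), Hh (n-1) * ((1 - r n) * PrBD μ X m n) := by
          rw [Finset.sum_range_succ, Finset.sum_range_succ, zB1, zB2, add_zero, add_zero]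
        rw [z0, add_zero] at e1
        rw [z1, add_zero] at e2
        calc ∑ i ∈ Finset.range (k+m+1), Hh ((i+2)-1) * ((1 - r (i+2)) * PrBD μ X m (i+2))
            = ∑ i ∈ Finset.range (k+m+2), Hh ((i+1)-1) * ((1 - r (i+1)) * PrBD μ X m (i+1)) := by
              rw [e2]
          _ = ∑ n ∈ Finset.range (k+m+3), Hh (n-1) * ((1 - r n) * PrBD μ X m n) := by
              rw [e1]
          _ = _ := e3
      rw [hshift, ← Finset.sum_add_distrib, ← ih]
      apply Finset.sum_congr rfl
      intro n hn
      rcases Nat.eq_zero_or_pos n with rfl | hnpos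
      · norm_num [Hh_zero]
      · rw [if_neg (by omega)]
        have hh := harmR hr hnpos
        have hsucc : n - 1 + 1 = n := by omega
        nlinarith [hh, PrBD_nonneg (μ := μ) (X := X) m n]

lemma sum_one (hX : IsBirthDeathChain μ X r k)
    (hr : ∀ n, 1 ≤ n → r n = (n + 1) / (2 * n + 1)) :
    Summable (fun m => PrBD μ X m 1) := by
  have hr1 : r 1 = 2/3 := by rw [hr 1 le_rfl]; norm_num
  apply summable_of_sum_range_le (c := 3) (fun m => PrBD_nonneg m 1)
  intro M
  have h2 : ∑ m ∈ Finset.range M, (1/3 : ℝ) * PrBD μ X m 1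
      = PrBD μ X M 0 - PrBD μ X 0 0 := by
    rw [← Finset.sum_range_sub (fun m => PrBD μ X m 0)]
    apply Finset.sum_congr rfl
    intro m _
    rw [rec0R hX hr m, hr1]
    ring
  have h3 : ∑ m ∈ Finset.range M, PrBD μ X m 1
      = 3 * (PrBD μ X M 0 - PrBD μ X 0 0) := by
    rw [← h2, Finset.mul_sum]
    apply Finset.sum_congr rfl
    intro m _
    ring
  rw [h3]
  have u1 := PrBD_le_one hX M 0
  have u2 := PrBD_nonneg (μ := μ) (X := X) 0 0
  linarith

lemma sum_n (hX : IsBirthDeathChain μ X r k)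
    (hr : ∀ n, 1 ≤ n → r n = (n + 1) / (2 * n + 1)) :
    ∀ n, 1 ≤ n → Summable (fun m => PrBD μ X m n) := by
  intro n hn
  induction n, hn using Nat.le_induction with
  | base => exact sum_one hX hr
  | succ n hn ih =>
      obtain ⟨i, rfl⟩ : ∃ i, n = i + 1 := ⟨n - 1, by omega⟩
      have hc : 0 < 1 - r (i+2) := by
        rw [hr (i+2) (by omega), sub_pos, div_lt_one (by positivity)]
        push_cast
        linarith [Nat.cast_nonneg (α := ℝ) i]
      have hle : ∀ m, (1 - r (i+2)) * PrBD μ X m (i+2) ≤ PrBD μ X (m+1) (i+1) := by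
        intro m
        rw [recU hX hr m i]
        split_ifs with h
        · linarith [PrBD_nonneg (μ := μ) (X := X) m (i+2)]
        · have hri := (r_bounds hr (show 1 ≤ i by omega)).1
          nlinarith [PrBD_nonneg (μ := μ) (X := X) m i,
            PrBD_nonneg (μ := μ) (X := X) m (i+2)]
      have hsh : Summable (fun m => PrBD μ X (m+1) (i+1)) :=
        (summable_nat_add_iff (f := fun m => PrBD μ X m (i+1)) 1).2 ih
      apply Summable.of_nonneg_of_le (fun m => PrBD_nonneg m (i+2))
        (fun m => ?_) (hsh.mul_left (1 - r (i+2))⁻¹)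
      calc PrBD μ X m (i+2)
          = (1 - r (i+2))⁻¹ * ((1 - r (i+2)) * PrBD μ X m (i+2)) := by
            field_simp
        _ ≤ (1 - r (i+2))⁻¹ * PrBD μ X (m+1) (i+1) :=
            mul_le_mul_of_nonneg_left (hle m) (by positivity)

lemma tend_zero (hX : IsBirthDeathChain μ X r k)
    (hr : ∀ n, 1 ≤ n → r n = (n + 1) / (2 * n + 1)) {n : ℕ} (hn : 1 ≤ n) :
    Tendsto (fun m => PrBD μ X m n) atTop (nhds 0) :=
  (sum_n hX hr n hn).tendsto_atTop_zero

lemma interior_small (hX : IsBirthDeathChain μ X r k)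
    (hr : ∀ n, 1 ≤ n → r n = (n + 1) / (2 * n + 1)) (N : ℕ) :
    Tendsto (fun m => ∑ n ∈ Finset.Ico 1 N, PrBD μ X m n) atTop (nhds 0) := by
  have h := tendsto_finset_sum (Finset.Ico 1 N)
    (fun n hn => tend_zero hX hr (Finset.mem_Ico.1 hn).1 (μ := μ) (X := X))
  simpa using h

lemma front_zero (hX : IsBirthDeathChain μ X r k) (m N : ℕ) :
    ∑ n ∈ Finset.range N, Hh n * PrBD μ X m n
      = ∑ n ∈ Finset.Ico 1 N, Hh n * PrBD μ X m n := by
  symm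
  apply Finset.sum_subset
  · intro x hx
    rw [Finset.mem_Ico] at hx
    exact Finset.mem_range.2 hx.2
  · intro x hx hnx
    rw [Finset.mem_range] at hx
    rw [Finset.mem_Ico] at hnx
    have : x = 0 := by omega
    rw [this, Hh_zero, zero_mul]

lemma tail_bound (hX : IsBirthDeathChain μ X r k)
    (hr : ∀ n, 1 ≤ n → r n = (n + 1) / (2 * n + 1)) (hk : 1 ≤ k)
    {m N : ℕ} (hN1 : 1 ≤ N) (hNB : N ≤ k + m + 1) :
    Hh k - Hh N * ∑ n ∈ Finset.Ico 1 N, PrBD μ X m n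
      ≤ ∑ n ∈ Finset.Ico N (k+m+1), Hh n * PrBD μ X m n := by
  have hsplit : ∑ n ∈ Finset.range N, Hh n * PrBD μ X m n
      + ∑ n ∈ Finset.Ico N (k+m+1), Hh n * PrBD μ X m n = Hh k := by
    rw [← conserve hX hr hk m, Finset.range_eq_Ico,
      Finset.sum_Ico_consecutive _ (Nat.zero_le N) hNB]
    rw [Finset.range_eq_Ico]
  have hfront : ∑ n ∈ Finset.range N, Hh n * PrBD μ X m n
      ≤ Hh N * ∑ n ∈ Finset.Ico 1 N, PrBD μ X m n := by
    rw [front_zero hX m N, Finset.mul_sum]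
    apply Finset.sum_le_sum
    intro n hn
    rw [Finset.mem_Ico] at hn
    exact mul_le_mul_of_nonneg_right (Hh_mono (by omega)) (PrBD_nonneg m n)
  linarith

lemma Pr0_big (hX : IsBirthDeathChain μ X r k)
    (hr : ∀ n, 1 ≤ n → r n = (n + 1) / (2 * n + 1)) (hk : 1 ≤ k) :
    ∀ ε : ℝ, 0 < ε → ∃ m, 1 - ε < PrBD μ X m 0 := by
  intro ε hε
  obtain ⟨N₀, hN₀⟩ := Hh_unbounded (2 * Hh k / ε)
  set N := max N₀ 1 with hNdef
  have hN1 : 1 ≤ N := le_max_right _ _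
  have hHN : 2 * Hh k / ε ≤ Hh N := le_trans hN₀ (Hh_mono (le_max_left _ _))
  have hHNpos : 0 < Hh N := Hh_pos hN1
  have htail_le : Hh k / Hh N ≤ ε / 2 := by
    rw [div_le_div_iff₀ hHNpos (by norm_num : (0:ℝ) < 2)]
    have h2 : 2 * Hh k ≤ Hh N * ε := by
      have := (div_le_iff₀ hε).1 hHN
      linarith
    linarith
  have hball := (interior_small hX hr N).eventually
    (gt_mem_nhds (show (0:ℝ) < ε/2 by linarith))
  obtain ⟨M, hM⟩ := Filter.eventually_atTop.1 hball
  refine ⟨max M N, ?_⟩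
  set m := max M N with hmdef
  have hmM : M ≤ m := le_max_left _ _
  have hmN : N ≤ m := le_max_right _ _
  have hNB : N ≤ k + m + 1 := by omega
  have hint : ∑ n ∈ Finset.Ico 1 N, PrBD μ X m n < ε/2 := hM m hmM
  -- mass split
  have htot : ∑ n ∈ Finset.range N, PrBD μ X m n
      + ∑ n ∈ Finset.Ico N (k+m+1), PrBD μ X m n = 1 := by
    rw [← totR hX hr hk m, Finset.range_eq_Ico,
      Finset.sum_Ico_consecutive _ (Nat.zero_le N) hNB]
    rw [Finset.range_eq_Ico]
  have hfront : ∑ n ∈ Finset.range N, PrBD μ X m n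
      = PrBD μ X m 0 + ∑ n ∈ Finset.Ico 1 N, PrBD μ X m n := by
    rw [Finset.range_eq_Ico, ← Finset.sum_Ico_consecutive _ (Nat.zero_le 1) hN1]
    congr 1
    rw [← Finset.range_eq_Ico, Finset.sum_range_one]
  -- tail of the mass is small by conservation
  have htails : Hh N * ∑ n ∈ Finset.Ico N (k+m+1), PrBD μ X m n ≤ Hh k := by
    have h1 : Hh N * ∑ n ∈ Finset.Ico N (k+m+1), PrBD μ X m n
        ≤ ∑ n ∈ Finset.Ico N (k+m+1), Hh n * PrBD μ X m n := by
      rw [Finset.mul_sum]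
      apply Finset.sum_le_sum
      intro n hn
      rw [Finset.mem_Ico] at hn
      exact mul_le_mul_of_nonneg_right (Hh_mono hn.1) (PrBD_nonneg m n)
    have h2 : ∑ n ∈ Finset.Ico N (k+m+1), Hh n * PrBD μ X m n
        ≤ ∑ n ∈ Finset.range (k+m+1), Hh n * PrBD μ X m n := by
      apply Finset.sum_le_sum_of_subset_of_nonneg
      · intro x hx
        rw [Finset.mem_Ico] at hx
        exact Finset.mem_range.2 hx.2
      · intro n _ _
        exact mul_nonneg (Hh_nonneg n) (PrBD_nonneg m n)
    rw [conserve hX hr hk m] at h2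
    linarith
  have htail2 : ∑ n ∈ Finset.Ico N (k+m+1), PrBD μ X m n ≤ Hh k / Hh N := by
    rw [le_div_iff₀ hHNpos]
    linarith
  linarith

lemma extinct (hX : IsBirthDeathChain μ X r k)
    (hr : ∀ n, 1 ≤ n → r n = (n + 1) / (2 * n + 1)) (hk : 1 ≤ k) :
    μ {ω | ∃ m, X m ω = 0} = 1 := by
  haveI := hX.isProb
  set S := {ω | ∃ m, X m ω = 0} with hSdef
  have hne : μ S ≠ ⊤ := measure_ne_top μ S
  have hle : (μ S).toReal ≤ 1 := by
    have := prob_le_one (μ := μ) (s := S)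
    calc (μ S).toReal ≤ ((1:ℝ≥0∞)).toReal := ENNReal.toReal_mono (by simp) this
      _ = 1 := by simp
  have hge : ∀ ε : ℝ, 0 < ε → 1 - ε < (μ S).toReal := by
    intro ε hε
    obtain ⟨m, hm⟩ := Pr0_big hX hr hk ε hε
    have hsub : {ω | X m ω = 0} ⊆ S := fun ω hω => ⟨m, hω⟩
    have : PrBD μ X m 0 ≤ (μ S).toReal :=
      ENNReal.toReal_mono hne (measure_mono hsub)
    linarith
  have h1 : (μ S).toReal = 1 := by
    by_contra h
    have hlt : (μ S).toReal < 1 := lt_of_le_of_ne hle h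
    have := hge ((1 - (μ S).toReal)/2) (by linarith)
    linarith
  calc μ S = ENNReal.ofReal ((μ S).toReal) := (ENNReal.ofReal_toReal hne).symm
    _ = 1 := by rw [h1, ENNReal.ofReal_one]

lemma integral_eqBD (hX : IsBirthDeathChain μ X r k)
    (hr : ∀ n, 1 ≤ n → r n = (n + 1) / (2 * n + 1)) (hk : 1 ≤ k) (m : ℕ) :
    ∫ ω, (X m ω : ℝ) ∂μ = ∑ n ∈ Finset.range (k+m+1), (n:ℝ) * PrBD μ X m n := by
  haveI := hX.isProb
  have hae : ∀ᵐ ω ∂μ, X m ω < k+m+1 := by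
    have hnull : μ {ω | k+m+1 ≤ X m ω} = 0 := by
      have hcover : {ω | k+m+1 ≤ X m ω} = ⋃ j : ℕ, {ω | X m ω = (k+m+1) + j} := by
        ext ω
        simp only [Set.mem_setOf_eq, Set.mem_iUnion]
        constructor
        · intro h; exact ⟨X m ω - (k+m+1), by omega⟩
        · rintro ⟨j, hj⟩; omega
      rw [hcover]
      exact measure_iUnion_null fun j => suppBD hX hr hk m ((k+m+1)+j) (by omega)
    rw [MeasureTheory.ae_iff]
    have : {ω | ¬ X m ω < k+m+1} = {ω | k+m+1 ≤ X m ω} := by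
      ext ω; simp [not_lt]
    rw [this]
    exact hnull
  have hint : ∀ n : ℕ, Integrable ((Set.indicator {ω | X m ω = n} (fun _ => (n:ℝ)))) μ :=
    fun n => (integrable_indicator_iff (measurable_setBD hX m n)).2
      (integrableOn_const (measure_ne_top μ _))
  have hg : ∫ ω, (∑ n ∈ Finset.range (k+m+1),
        Set.indicator {ω' | X m ω' = n} (fun _ => (n:ℝ)) ω) ∂μ
      = ∑ n ∈ Finset.range (k+m+1), (n:ℝ) * PrBD μ X m n := by
    rw [integral_finset_sum _ (fun n _ => hint n)]
    apply Finset.sum_congr rfl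
    intro n _
    rw [integral_indicator_const _ (measurable_setBD hX m n), smul_eq_mul, PrBD, ppBD]
    rw [measureReal_def]
    ring
  rw [← hg]
  apply integral_congr_ae
  filter_upwards [hae] with ω hω
  have : ∑ n ∈ Finset.range (k+m+1),
      Set.indicator {ω' | X m ω' = n} (fun _ => (n:ℝ)) ω = (X m ω : ℝ) := by
    rw [Finset.sum_eq_single_of_mem (X m ω) (Finset.mem_range.2 hω)]
    · exact Set.indicator_of_mem rfl _
    · intro b _ hb
      exact Set.indicator_of_notMem (fun hmem => hb (by exact hmem.symm)) _
  rw [this]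

lemma divergeBD (hX : IsBirthDeathChain μ X r k)
    (hr : ∀ n, 1 ≤ n → r n = (n + 1) / (2 * n + 1)) (hk : 1 ≤ k) :
    Tendsto (fun m => ∫ ω, (X m ω : ℝ) ∂μ) atTop atTop := by
  rw [tendsto_atTop]
  intro C
  set D := max C 1 with hDdef
  have hD1 : (1:ℝ) ≤ D := le_max_right _ _
  have hDpos : (0:ℝ) < D := by linarith
  set N := ⌈(4*D)^2⌉₊ + 1 with hNdef
  have hN1 : 1 ≤ N := by omega
  have hNge : (4*D)^2 ≤ (N:ℝ) := by
    have h := Nat.le_ceil ((4*D)^2)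
    have : ((⌈(4*D)^2⌉₊ : ℝ)) ≤ ((⌈(4*D)^2⌉₊ + 1 : ℕ) : ℝ) := by push_cast; linarith
    calc (4*D)^2 ≤ (⌈(4*D)^2⌉₊ : ℝ) := h
      _ ≤ _ := this
  have hsq : 4*D ≤ Real.sqrt N := by
    rw [show (4*D) = Real.sqrt ((4*D)^2) from (Real.sqrt_sq (by positivity)).symm]
    exact Real.sqrt_le_sqrt hNge
  have hHN : Hh N ≤ 2 * Real.sqrt N := Hh_le_two_sqrt hN1
  have hHNpos : 0 < Hh N := Hh_pos hN1
  have hk1 : 1 ≤ Hh k := Hh_one_le hk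
  have hkey : 2 * D * Hh N ≤ (N:ℝ) * Hh k := by
    have h2 : 4*D*Real.sqrt N ≤ Real.sqrt N * Real.sqrt N :=
      mul_le_mul_of_nonneg_right hsq (Real.sqrt_nonneg _)
    have h3 : Real.sqrt N * Real.sqrt N = (N:ℝ) := Real.mul_self_sqrt (Nat.cast_nonneg N)
    have hNpos : (0:ℝ) ≤ (N:ℝ) := Nat.cast_nonneg N
    nlinarith
  have hball := (interior_small hX hr N).eventually
    (gt_mem_nhds (show (0:ℝ) < Hh k/(2*Hh N) by positivity))
  obtain ⟨M, hM⟩ := Filter.eventually_atTop.1 hball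
  refine Filter.eventually_atTop.2 ⟨max M N, ?_⟩
  intro m hm
  have hmM : M ≤ m := le_trans (le_max_left _ _) hm
  have hmN : N ≤ m := le_trans (le_max_right _ _) hm
  have hNB : N ≤ k + m + 1 := by omega
  rw [integral_eqBD hX hr hk m]
  have hint : ∑ n ∈ Finset.Ico 1 N, PrBD μ X m n < Hh k/(2*Hh N) := hM m hmM
  have htail : Hh k / 2 ≤ ∑ n ∈ Finset.Ico N (k+m+1), Hh n * PrBD μ X m n := by
    have h1 := tail_bound hX hr hk hN1 hNB (m := m)
    have h2 : Hh N * ∑ n ∈ Finset.Ico 1 N, PrBD μ X m n ≤ Hh N * (Hh k/(2*Hh N)) :=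
      mul_le_mul_of_nonneg_left hint.le hHNpos.le
    have h3 : Hh N * (Hh k/(2*Hh N)) = Hh k/2 := by
      field_simp
    linarith
  have hterm : ∀ n ∈ Finset.Ico N (k+m+1),
      ((N:ℝ)/Hh N) * (Hh n * PrBD μ X m n) ≤ (n:ℝ) * PrBD μ X m n := by
    intro n hn
    have hNn := (Finset.mem_Ico.1 hn).1
    have hratio := Hh_ratio hN1 hNn
    have hPr := PrBD_nonneg (μ := μ) (X := X) m n
    rw [div_mul_eq_mul_div, div_le_iff₀ hHNpos]
    have hHn := Hh_nonneg n
    nlinarith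
  have hsum2 : ((N:ℝ)/Hh N) * (Hh k/2)
      ≤ ∑ n ∈ Finset.Ico N (k+m+1), (n:ℝ) * PrBD μ X m n := by
    calc ((N:ℝ)/Hh N) * (Hh k/2)
        ≤ ((N:ℝ)/Hh N) * ∑ n ∈ Finset.Ico N (k+m+1), Hh n * PrBD μ X m n :=
          mul_le_mul_of_nonneg_left htail (by positivity)
      _ = ∑ n ∈ Finset.Ico N (k+m+1), ((N:ℝ)/Hh N) * (Hh n * PrBD μ X m n) :=
          Finset.mul_sum _ _ _
      _ ≤ _ := Finset.sum_le_sum hterm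
  have hdrop : ∑ n ∈ Finset.Ico N (k+m+1), (n:ℝ) * PrBD μ X m n
      ≤ ∑ n ∈ Finset.range (k+m+1), (n:ℝ) * PrBD μ X m n := by
    apply Finset.sum_le_sum_of_subset_of_nonneg
    · intro x hx
      rw [Finset.mem_Ico] at hx
      exact Finset.mem_range.2 hx.2
    · intro n _ _
      exact mul_nonneg (Nat.cast_nonneg n) (PrBD_nonneg m n)
  have hfinal : C ≤ ((N:ℝ)/Hh N) * (Hh k/2) := by
    rw [div_mul_eq_mul_div, le_div_iff₀ hHNpos]
    have hCD : C ≤ D := le_max_left _ _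
    nlinarith
  linarith

end Chain

/-- The birth-death chain with `lₙ = n/(2n+1)`, `rₙ = (n+1)/(2n+1)` goes extinct almost
surely, yet its expected value tends to infinity. -/
theorem example_chain_extinct_but_mean_diverges {Ω : Type*} [MeasurableSpace Ω]
    (μ : Measure Ω) (X : ℕ → Ω → ℕ) (r : ℕ → ℝ) (k : ℕ) (hk : 1 ≤ k)
    (hr : ∀ n, 1 ≤ n → r n = (n + 1) / (2 * n + 1))
    (hX : IsBirthDeathChain μ X r k) :
    μ {ω | ∃ m, X m ω = 0} = 1 ∧
      Tendsto (fun m => ∫ ω, (X m ω : ℝ) ∂μ) atTop atTop := by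
  exact ⟨extinct hX hr hk, divergeBD hX hr hk⟩
end
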